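/- arXiv:1608.02197 — 3 statements merged into one kernel-verified Lean document; each statement's English description precedes it below -/
import Mathlib

section
/- Let k ≥ 1 and consider the hierarchical graph H_{2,…,2} (k copies of 2), whose vertices are binary strings of length k. If x = x_1…x_k is a vertex with x_k = 0, then the eccentricity of x equals alt(x) + k. -/
/-- The value of the `j`-th coordinate (0-indexed) of the string `x`,
extended by `0` for positions `≥ k`. -/
def extVal (n : ℕ → ℕ) (k : ℕ) (x : ∀ i : Fin k, Fin (n i)) (j : ℕ) : ℕ :=
  if h : j < k then (x ⟨j, h⟩).val else 0

/-- The alternating number of the string `x`: the number of (0-indexed) positions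
`j ∈ {0,…,k-1}` such that exactly one of `x_j`, `x_{j+1}` is zero (with `x_k := 0`). -/
def altNum (n : ℕ → ℕ) (k : ℕ) (x : ∀ i : Fin k, Fin (n i)) : ℕ :=
  ((Finset.range k).filter (fun j =>
    (extVal n k x j = 0 ∧ extVal n k x (j + 1) ≠ 0) ∨
    (extVal n k x j ≠ 0 ∧ extVal n k x (j + 1) = 0))).card

/-- Adjacency in the hierarchical graph `H_{n_1,…,n_k}` (coordinates 0-indexed):
rule (A1): the two strings differ exactly in the first coordinate;
rule (A2): for some `j`, one string has its first `j+1` coordinates all zero, the other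
has its first `j+1` coordinates all nonzero, and they agree on the remaining coordinates;
rule (A3): for some `m ≥ 1`, both strings have their first `m` coordinates zero, their
`m`-th coordinates are distinct and nonzero, and they agree beyond position `m`. -/
def HierAdj (n : ℕ → ℕ) (k : ℕ) (x y : ∀ i : Fin k, Fin (n i)) : Prop :=
  x ≠ y ∧
    ((∀ i : Fin k, 0 < i.val → x i = y i) ∨
     (∃ j : Fin k,
       (((∀ i : Fin k, i.val ≤ j.val → (x i).val = 0) ∧
         (∀ i : Fin k, i.val ≤ j.val → (y i).val ≠ 0)) ∨
        ((∀ i : Fin k, i.val ≤ j.val → (y i).val = 0) ∧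
         (∀ i : Fin k, i.val ≤ j.val → (x i).val ≠ 0))) ∧
       (∀ i : Fin k, j.val < i.val → x i = y i)) ∨
     (∃ m : Fin k, 0 < m.val ∧
       (∀ i : Fin k, i.val < m.val → (x i).val = 0 ∧ (y i).val = 0) ∧
       (x m).val ≠ 0 ∧ (y m).val ≠ 0 ∧ x m ≠ y m ∧
       (∀ i : Fin k, m.val < i.val → x i = y i)))

/-- The hierarchical graph `H_{n_1,…,n_k}` as a simple graph on the strings
`x = x_1…x_k` with `x_i ∈ Z_{n_i}`. -/
def hierGraph (n : ℕ → ℕ) (k : ℕ) : SimpleGraph (∀ i : Fin k, Fin (n i)) where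
  Adj := HierAdj n k
  symm := by
    refine ⟨?_⟩
    rintro x y ⟨hne, h⟩
    refine ⟨hne.symm, ?_⟩
    rcases h with h | ⟨j, hj, hag⟩ | ⟨m, hm, hpre, hx, hy, hxy, hs⟩
    · exact Or.inl fun i hi => (h i hi).symm
    · exact Or.inr (Or.inl ⟨j, hj.symm, fun i hi => (hag i hi).symm⟩)
    · exact Or.inr (Or.inr ⟨m, hm, fun i hi => ⟨(hpre i hi).2, (hpre i hi).1⟩,
        hy, hx, hxy.symm, fun i hi => (hs i hi).symm⟩)
  loopless := ⟨fun x h => h.1 rfl⟩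


namespace Stmt8Aux

variable {k : ℕ}

def e (x : ∀ i : Fin k, Fin 2) (j : ℕ) : ℕ := extVal (fun _ => 2) k x j

lemma e_lt {x : ∀ i : Fin k, Fin 2} {j : ℕ} (h : j < k) : e x j = (x ⟨j, h⟩).val := by
  unfold e extVal; rw [dif_pos h]

lemma e_ge {x : ∀ i : Fin k, Fin 2} {j : ℕ} (h : k ≤ j) : e x j = 0 := by
  unfold e extVal; rw [dif_neg (by omega)]

lemma e_le_one (x : ∀ i : Fin k, Fin 2) (j : ℕ) : e x j ≤ 1 := by
  unfold e extVal
  split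
  · exact Nat.lt_succ_iff.mp (x ⟨j, ‹_›⟩).isLt
  · exact Nat.zero_le 1

lemma e_fin (x : ∀ i : Fin k, Fin 2) (i : Fin k) : e x i.val = (x i).val := by
  rw [e_lt i.isLt]

lemma eq_of_e_eq {x y : ∀ i : Fin k, Fin 2} (h : ∀ j, e x j = e y j) : x = y := by
  funext i
  have := h i.val
  rw [e_fin, e_fin] at this
  exact Fin.ext this

/-- indicator of a transition at position j -/
def tt (x : ∀ i : Fin k, Fin 2) (j : ℕ) : ℕ := if e x j = e x (j+1) then 0 else 1

def T (x : ∀ i : Fin k, Fin 2) (m : ℕ) : ℕ := ∑ j ∈ Finset.range m, tt x j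

lemma tt_le_one (x : ∀ i : Fin k, Fin 2) (j : ℕ) : tt x j ≤ 1 := by
  unfold tt; split <;> omega

lemma T_mono (x : ∀ i : Fin k, Fin 2) {a b : ℕ} (h : a ≤ b) : T x a ≤ T x b :=
  Finset.sum_le_sum_of_subset (Finset.range_subset_range.mpr h)

lemma T_le (x : ∀ i : Fin k, Fin 2) (m : ℕ) : T x m ≤ m := by
  calc T x m ≤ ∑ j ∈ Finset.range m, 1 := Finset.sum_le_sum (fun i _ => tt_le_one x i)
  _ = m := by simp

lemma altNum_eq (x : ∀ i : Fin k, Fin 2) : altNum (fun _ => 2) k x = T x k := by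
  unfold altNum T
  rw [Finset.card_filter]
  refine Finset.sum_congr rfl (fun j _ => ?_)
  have h1 := e_le_one x j
  have h2 := e_le_one x (j+1)
  unfold tt
  unfold e at *
  split_ifs <;> omega

lemma T_zero_of_const {x : ∀ i : Fin k, Fin 2} {c j a : ℕ} (hx : ∀ i ≤ j, e x i = c)
    (ha : a ≤ j) : T x a = 0 := by
  refine Finset.sum_eq_zero (fun i hi => ?_)
  rw [Finset.mem_range] at hi
  unfold tt
  rw [hx i (by omega), hx (i+1) (by omega), if_pos rfl]

lemma const_of_tt {x : ∀ i : Fin k, Fin 2} {m : ℕ} (h : ∀ i < m, tt x i = 0) :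
    ∀ i ≤ m, e x i = e x 0 := by
  intro i hi
  induction i with
  | zero => rfl
  | succ n ih =>
    have hn := h n (by omega)
    unfold tt at hn
    split at hn
    · rw [← ‹e x n = e x (n+1)›]; exact ih (by omega)
    · omega

set_option linter.unusedVariables false

/-- set of differing positions -/
def diffs (x y : ∀ i : Fin k, Fin 2) : Finset ℕ :=
  (Finset.range k).filter (fun j => e x j ≠ e y j)

lemma diffs_nonempty {x y : ∀ i : Fin k, Fin 2} (h : x ≠ y) : (diffs x y).Nonempty := by
  by_contra hne
  rw [Finset.not_nonempty_iff_eq_empty] at hne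
  refine h (eq_of_e_eq (fun j => ?_))
  by_cases hj : j < k
  · by_contra hne2
    have : j ∈ diffs x y := Finset.mem_filter.mpr ⟨Finset.mem_range.mpr hj, hne2⟩
    simp [hne] at this
  · rw [e_ge (by omega), e_ge (by omega)]

/-- the largest differing position -/
def mtop (x y : ∀ i : Fin k, Fin 2) : ℕ :=
  if h : (diffs x y).Nonempty then (diffs x y).max' h else 0

lemma mtop_mem {x y : ∀ i : Fin k, Fin 2} (h : x ≠ y) : mtop x y ∈ diffs x y := by
  rw [mtop, dif_pos (diffs_nonempty h)]
  exact Finset.max'_mem _ _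

lemma mtop_lt {x y : ∀ i : Fin k, Fin 2} (h : x ≠ y) : mtop x y < k :=
  Finset.mem_range.mp (Finset.mem_filter.mp (mtop_mem h)).1

lemma mtop_ne {x y : ∀ i : Fin k, Fin 2} (h : x ≠ y) : e x (mtop x y) ≠ e y (mtop x y) :=
  (Finset.mem_filter.mp (mtop_mem h)).2

lemma le_mtop {x y : ∀ i : Fin k, Fin 2} (h : x ≠ y) {i : ℕ} (hi : e x i ≠ e y i) :
    i ≤ mtop x y := by
  have hik : i < k := by
    by_contra hik
    exact hi (by rw [e_ge (by omega), e_ge (by omega)])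
  have : i ∈ diffs x y := Finset.mem_filter.mpr ⟨Finset.mem_range.mpr hik, hi⟩
  rw [mtop, dif_pos (diffs_nonempty h)]
  exact Finset.le_max' _ _ this

lemma eq_above {x y : ∀ i : Fin k, Fin 2} (h : x ≠ y) {i : ℕ} (hi : mtop x y < i) :
    e x i = e y i := by
  by_contra hne
  exact absurd (le_mtop h hne) (by omega)

lemma mtop_eq {x y : ∀ i : Fin k, Fin 2} (h : x ≠ y) {M : ℕ} (hM : e x M ≠ e y M)
    (hab : ∀ i, M < i → e x i = e y i) : mtop x y = M := by
  have h1 : M ≤ mtop x y := le_mtop h hM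
  have h2 : ¬ (M < mtop x y) := fun hc => mtop_ne h (hab _ hc)
  omega

/-- The distance function. -/
def D (x y : ∀ i : Fin k, Fin 2) : ℕ :=
  if x = y then 0 else 1 + T x (mtop x y) + T y (mtop x y)

lemma D_self (x : ∀ i : Fin k, Fin 2) : D x x = 0 := if_pos rfl

lemma D_of_ne {x y : ∀ i : Fin k, Fin 2} (h : x ≠ y) :
    D x y = 1 + T x (mtop x y) + T y (mtop x y) := if_neg h

lemma D_pos {x y : ∀ i : Fin k, Fin 2} (h : x ≠ y) : 1 ≤ D x y := by
  rw [D_of_ne h]; omega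

/-- canonical adjacency elimination -/
lemma adj_elim {x z : ∀ i : Fin k, Fin 2} (h : (hierGraph (fun _ => 2) k).Adj x z) :
    ∃ j < k, ∃ c ≤ 1, (∀ i ≤ j, e x i = c) ∧ (∀ i ≤ j, e z i = 1 - c) ∧
      (∀ i, j < i → e x i = e z i) := by
  obtain ⟨hne, h⟩ := h
  have agree : ∀ (j : ℕ), (∀ i : Fin k, j < i.val → x i = z i) → ∀ i, j < i → e x i = e z i := by
    intro j hj i hi
    by_cases hik : i < k
    · rw [e_lt hik, e_lt hik, hj ⟨i, hik⟩ hi]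
    · rw [e_ge (by omega), e_ge (by omega)]
  rcases h with h | ⟨j, hj, hag⟩ | ⟨m, hm, hpre, hxm, hzm, hxzm, hs⟩
  · -- A1
    have hk0 : 0 < k := by
      rcases Nat.eq_zero_or_pos k with hk | hk
      · exact absurd (funext fun i => absurd i.isLt (by omega)) hne
      · exact hk
    have hx0 : x ⟨0, hk0⟩ ≠ z ⟨0, hk0⟩ := by
      intro heq
      refine hne (funext fun i => ?_)
      rcases Nat.eq_zero_or_pos i.val with h0 | h0
      · have : i = ⟨0, hk0⟩ := Fin.ext h0
        rw [this]; exact heq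
      · exact h i h0
    refine ⟨0, hk0, e x 0, e_le_one x 0, ?_, ?_, ?_⟩
    · intro i hi
      have hi0 : i = 0 := by omega
      subst hi0
      rfl
    · intro i hi
      have hi0 : i = 0 := by omega
      subst hi0
      have h1 : e x 0 = (x ⟨0, hk0⟩).val := e_lt hk0
      have h2 : e z 0 = (z ⟨0, hk0⟩).val := e_lt hk0
      have hv : (x ⟨0, hk0⟩).val ≠ (z ⟨0, hk0⟩).val := fun hc => hx0 (Fin.ext hc)
      have b1 : (x ⟨0, hk0⟩).val ≤ 1 := Nat.lt_succ_iff.mp (x _).isLt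
      have b2 : (z ⟨0, hk0⟩).val ≤ 1 := Nat.lt_succ_iff.mp (z _).isLt
      omega
    · exact agree 0 (fun i hi => h i hi)
  · -- A2
    rcases hj with ⟨hx0, hz1⟩ | ⟨hz0, hx1⟩
    · refine ⟨j.val, j.isLt, 0, by omega, ?_, ?_, agree j.val hag⟩
      · intro i hi
        have hik : i < k := by omega
        rw [e_lt hik]; exact hx0 ⟨i, hik⟩ hi
      · intro i hi
        have hik : i < k := by omega
        rw [e_lt hik]
        have := hz1 ⟨i, hik⟩ hi
        have b : (z ⟨i, hik⟩).val ≤ 1 := Nat.lt_succ_iff.mp (z _).isLt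
        omega
    · refine ⟨j.val, j.isLt, 1, le_refl 1, ?_, ?_, agree j.val hag⟩
      · intro i hi
        have hik : i < k := by omega
        rw [e_lt hik]
        have := hx1 ⟨i, hik⟩ hi
        have b : (x ⟨i, hik⟩).val ≤ 1 := Nat.lt_succ_iff.mp (x _).isLt
        omega
      · intro i hi
        have hik : i < k := by omega
        rw [e_lt hik]
        have := hz0 ⟨i, hik⟩ hi
        omega
  · -- A3 impossible
    exfalso
    have b1 : (x m).val ≤ 1 := Nat.lt_succ_iff.mp (x m).isLt
    have b2 : (z m).val ≤ 1 := Nat.lt_succ_iff.mp (z m).isLt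
    exact hxzm (Fin.ext (by omega))

lemma adj_of {x z : ∀ i : Fin k, Fin 2} {j c : ℕ} (hjk : j < k) (hc : c ≤ 1)
    (hx : ∀ i ≤ j, e x i = c) (hz : ∀ i ≤ j, e z i = 1 - c)
    (hag : ∀ i, j < i → e x i = e z i) : (hierGraph (fun _ => 2) k).Adj x z := by
  have hne : x ≠ z := by
    intro heq
    have h1 := hx j (le_refl j)
    have h2 := hz j (le_refl j)
    rw [heq] at h1
    omega
  refine ⟨hne, Or.inr (Or.inl ⟨⟨j, hjk⟩, ?_, ?_⟩)⟩
  · rcases Nat.eq_zero_or_pos c with h0 | h0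
    · subst h0
      refine Or.inl ⟨fun i hi => ?_, fun i hi => ?_⟩
      · rw [← e_fin]; exact hx i.val hi
      · rw [← e_fin]; rw [hz i.val hi]; omega
    · have hc1 : c = 1 := by omega
      subst hc1
      refine Or.inr ⟨fun i hi => ?_, fun i hi => ?_⟩
      · rw [← e_fin]; rw [hz i.val hi]
      · rw [← e_fin]; rw [hx i.val hi]; omega
  · intro i hi
    have := hag i.val hi
    rw [e_fin, e_fin] at this
    exact Fin.ext this

lemma lip {x z : ∀ i : Fin k, Fin 2} {j c : ℕ} (hjk : j < k) (hc : c ≤ 1)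
    (hx : ∀ i ≤ j, e x i = c) (hz : ∀ i ≤ j, e z i = 1 - c)
    (hag : ∀ i, j < i → e x i = e z i) (y : ∀ i : Fin k, Fin 2) :
    D z y ≤ D x y + 1 := by
  have hxz : x ≠ z := by
    intro heq
    have h1 := hx j (le_refl j)
    have h2 := hz j (le_refl j)
    rw [heq] at h1; omega
  by_cases hzy : z = y
  · subst hzy; rw [D_self]; omega
  by_cases hxy : x = y
  · subst hxy
    have hzx : z ≠ x := fun h => hxz h.symm
    have hm : mtop z x = j := by
      refine mtop_eq hzx ?_ (fun i hi => (hag i hi).symm)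
      rw [hx j (le_refl j), hz j (le_refl j)]; omega
    rw [D_of_ne hzx, hm, T_zero_of_const hz (le_refl j), T_zero_of_const hx (le_refl j),
      D_self]
  · by_cases hab : ∃ i, j < i ∧ e x i ≠ e y i
    · obtain ⟨w, hw1, hw2⟩ := hab
      set m := mtop x y with hmdef
      have hjm : j < m := lt_of_lt_of_le hw1 (le_mtop hxy hw2)
      have hzm : e z m ≠ e y m := by
        rw [← hag m hjm]; exact mtop_ne hxy
      have hmz : mtop z y = m := by
        refine mtop_eq hzy hzm (fun i hi => ?_)
        rw [← hag i (by omega)]; exact eq_above hxy hi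
      rw [D_of_ne hzy, D_of_ne hxy, hmz, ← hmdef]
      have key : T z m ≤ T x m + 1 := by
        have hterm : ∀ i ∈ Finset.range m, tt z i ≤ tt x i + (if i = j then 1 else 0) := by
          intro i hi
          rcases lt_trichotomy i j with h | h | h
          · have e1 : e z i = 1 - c := hz i (by omega)
            have e2 : e z (i+1) = 1 - c := hz (i+1) (by omega)
            have : tt z i = 0 := by unfold tt; rw [e1, e2, if_pos rfl]
            omega
          · subst h
            rw [if_pos rfl]
            have := tt_le_one z i
            omega
          · rw [if_neg (by omega)]
            have e1 : e z i = e x i := (hag i h).symm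
            have e2 : e z (i+1) = e x (i+1) := (hag (i+1) (by omega)).symm
            unfold tt
            rw [e1, e2]
            omega
        calc T z m ≤ ∑ i ∈ Finset.range m, (tt x i + (if i = j then 1 else 0)) :=
              Finset.sum_le_sum hterm
          _ = T x m + ∑ i ∈ Finset.range m, (if i = j then 1 else 0) := by
              rw [Finset.sum_add_distrib]; rfl
          _ = T x m + 1 := by
              rw [Finset.sum_ite_eq' (Finset.range m) j (fun _ => 1),
                if_pos (Finset.mem_range.mpr hjm)]
      omega
    · push_neg at hab
      have hzag : ∀ i, j < i → e z i = e y i := by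
        intro i hi; rw [← hag i hi]; exact hab i hi
      set a := mtop x y with hadef
      set b := mtop z y with hbdef
      have haj : a ≤ j := by
        by_contra hcon
        exact mtop_ne hxy (hab a (by omega))
      have hbj : b ≤ j := by
        by_contra hcon
        exact mtop_ne hzy (hzag b (by omega))
      rw [D_of_ne hzy, D_of_ne hxy, ← hadef, ← hbdef,
        T_zero_of_const hx haj, T_zero_of_const hz hbj]
      -- goal: 1 + 0 + T y b ≤ 1 + 0 + T y a + 1
      have key : T y b ≤ T y a + 1 := by
        rcases le_or_gt b a with h | h
        · have := T_mono y h; omega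
        · -- a < b ≤ j
          have hyc : ∀ i, a < i → i ≤ j → e y i = c := by
            intro i hi1 hi2
            rw [← eq_above hxy hi1]
            exact hx i hi2
          have hsplit : T y b = T y a + ∑ i ∈ Finset.Ico a b, tt y i := by
            show (∑ i ∈ Finset.range b, tt y i) = (∑ i ∈ Finset.range a, tt y i) + _
            rw [Finset.range_eq_Ico, Finset.range_eq_Ico,
              Finset.sum_Ico_consecutive (tt y) (Nat.zero_le a) (le_of_lt h)]
          have hIco : ∑ i ∈ Finset.Ico a b, tt y i ≤ 1 := by
            rw [Finset.sum_eq_sum_Ico_succ_bot h]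
            have h0 : ∑ i ∈ Finset.Ico (a+1) b, tt y i = 0 := by
              refine Finset.sum_eq_zero (fun i hi => ?_)
              rw [Finset.mem_Ico] at hi
              have e1 : e y i = c := hyc i (by omega) (by omega)
              have e2 : e y (i+1) = c := hyc (i+1) (by omega) (by omega)
              unfold tt
              rw [e1, e2, if_pos rfl]
            rw [h0]
            have := tt_le_one y a
            omega
          omega
      omega

/-- flip all coordinates at positions `≤ m` -/
def flipBelow (x : ∀ i : Fin k, Fin 2) (m : ℕ) : ∀ i : Fin k, Fin 2 :=
  fun i => if i.val ≤ m then (if (x i).val = 0 then 1 else 0) else x i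

lemma flip_le {x : ∀ i : Fin k, Fin 2} {m i : ℕ} (him : i ≤ m) (hik : i < k) :
    e (flipBelow x m) i = 1 - e x i := by
  rw [e_lt hik, e_lt hik]
  show (if (⟨i, hik⟩ : Fin k).val ≤ m then (if (x ⟨i, hik⟩).val = 0 then (1:Fin 2) else 0)
      else x ⟨i, hik⟩).val = 1 - (x ⟨i, hik⟩).val
  rw [if_pos him]
  have b : (x ⟨i, hik⟩).val ≤ 1 := Nat.lt_succ_iff.mp (x _).isLt
  by_cases h0 : (x ⟨i, hik⟩).val = 0
  · rw [if_pos h0, h0]; rfl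
  · rw [if_neg h0]
    have : (x ⟨i, hik⟩).val = 1 := by omega
    rw [this]; rfl

lemma flip_gt {x : ∀ i : Fin k, Fin 2} {m i : ℕ} (him : m < i) :
    e (flipBelow x m) i = e x i := by
  by_cases hik : i < k
  · rw [e_lt hik, e_lt hik]
    show (if (⟨i, hik⟩ : Fin k).val ≤ m then _ else x ⟨i, hik⟩).val = _
    rw [if_neg (by simp; omega)]
  · rw [e_ge (by omega), e_ge (by omega)]

lemma step {x y : ∀ i : Fin k, Fin 2} (h : x ≠ y) :
    ∃ z, (hierGraph (fun _ => 2) k).Adj x z ∧ D z y < D x y := by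
  set m := mtop x y with hmdef
  have hmk : m < k := mtop_lt h
  by_cases hT : T x m = 0
  · -- x is constant on [0, m]
    have htt : ∀ i < m, tt x i = 0 := by
      intro i hi
      have := Finset.sum_eq_zero_iff.mp hT i (Finset.mem_range.mpr hi)
      exact this
    have hcon := const_of_tt htt
    set c := e x 0 with hcdef
    have hc : c ≤ 1 := e_le_one x 0
    set z := flipBelow x m with hzdef
    have hzconst : ∀ i ≤ m, e z i = 1 - c := by
      intro i hi
      rw [flip_le hi (by omega), hcon i hi]
    have hagree : ∀ i, m < i → e x i = e z i := fun i hi => (flip_gt hi).symm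
    have hadj := adj_of hmk hc hcon hzconst hagree
    refine ⟨z, hadj, ?_⟩
    by_cases hzy : z = y
    · rw [hzy, D_self]; exact D_pos h
    · have hym : e y m = 1 - c := by
        have h1 := mtop_ne h
        rw [← hmdef] at h1
        have h2 := hcon m (le_refl m)
        have h3 := e_le_one y m
        omega
      have hzm : e z m = e y m := by rw [hzconst m (le_refl m), hym]
      have hzae : ∀ i, m < i → e z i = e y i := by
        intro i hi
        rw [← hagree i hi]
        exact eq_above h hi
      set m' := mtop z y with hm'def
      have hm'm : m' < m := by
        have h1 : ¬ (m < m') := fun hc2 => mtop_ne hzy (hzae m' hc2)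
        have h2 : m' ≠ m := by
          intro hc2
          refine mtop_ne hzy ?_
          rw [← hm'def, hc2]
          exact hzm
        omega
      have hym' : e y m' = c := by
        have h1 := mtop_ne hzy
        rw [← hm'def] at h1
        have h2 := hzconst m' (by omega)
        have h3 := e_le_one y m'
        omega
      have hym'1 : e y (m'+1) = 1 - c := by
        have h1 := eq_above hzy (Nat.lt_succ_self m')
        rw [← h1]
        exact hzconst (m'+1) (by omega)
      have htty : tt y m' = 1 := by
        unfold tt
        rw [if_neg (by omega)]
      have hTy : T y m' + 1 ≤ T y m := by
        have h1 : T y (m'+1) = T y m' + tt y m' := Finset.sum_range_succ _ _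
        have h2 := T_mono y (show m'+1 ≤ m by omega)
        omega
      rw [D_of_ne hzy, D_of_ne h, ← hmdef, ← hm'def, hT,
        T_zero_of_const hzconst (le_of_lt hm'm)]
      omega
  · -- there is a transition below m
    have hex : ∃ i, i < m ∧ tt x i ≠ 0 := by
      by_contra hcon
      push_neg at hcon
      exact hT (Finset.sum_eq_zero (fun i hi =>
        hcon i (Finset.mem_range.mp hi)))
    set p := Nat.find hex with hpdef
    obtain ⟨hpm, http⟩ := Nat.find_spec hex
    rw [← hpdef] at hpm http
    have hmin : ∀ i < p, tt x i = 0 := by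
      intro i hi
      have h2 := Nat.find_min hex hi
      push_neg at h2
      exact h2 (by omega)
    have hcon := const_of_tt (m := p) (fun i hi => hmin i hi)
    set c := e x 0 with hcdef
    have hc : c ≤ 1 := e_le_one x 0
    have hxp1 : e x (p+1) = 1 - c := by
      unfold tt at http
      split at http
      · omega
      · have h1 := hcon p (le_refl p)
        have h2 := e_le_one x (p+1)
        have h3 := e_le_one x p
        omega
    set z := flipBelow x p with hzdef
    have hzconst : ∀ i ≤ p, e z i = 1 - c := by
      intro i hi
      rw [flip_le hi (by omega), hcon i hi]
    have hagree : ∀ i, p < i → e x i = e z i := fun i hi => (flip_gt hi).symm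
    have hadj := adj_of (show p < k by omega) hc hcon hzconst hagree
    refine ⟨z, hadj, ?_⟩
    have hzy : z ≠ y := by
      intro heq
      have h1 := mtop_ne h
      have h2 := hagree m hpm
      rw [heq] at h2
      exact h1 h2
    have hmz : mtop z y = m := by
      refine mtop_eq hzy ?_ (fun i hi => ?_)
      · rw [← hagree m hpm]; exact mtop_ne h
      · rw [← hagree i (by omega)]; exact eq_above h hi
    have hsum : T z m < T x m := by
      refine Finset.sum_lt_sum (fun i hi => ?_) ⟨p, Finset.mem_range.mpr hpm, ?_⟩
      · rcases lt_trichotomy i p with hip | hip | hip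
        · have e1 : e z i = 1 - c := hzconst i (by omega)
          have e2 : e z (i+1) = 1 - c := hzconst (i+1) (by omega)
          have : tt z i = 0 := by unfold tt; rw [e1, e2, if_pos rfl]
          omega
        · have e1 : e z i = 1 - c := hzconst i (by omega)
          have e2 : e z (i+1) = 1 - c := by
            rw [← hagree (i+1) (by omega), hip]
            exact hxp1
          have : tt z i = 0 := by unfold tt; rw [e1, e2, if_pos rfl]
          omega
        · have e1 : e z i = e x i := (hagree i hip).symm
          have e2 : e z (i+1) = e x (i+1) := (hagree (i+1) (by omega)).symm
          unfold tt
          rw [e1, e2]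
      · have e1 : e z p = 1 - c := hzconst p (le_refl p)
        have e2 : e z (p+1) = 1 - c := by rw [← hagree (p+1) (by omega)]; exact hxp1
        have hz0 : tt z p = 0 := by unfold tt; rw [e1, e2, if_pos rfl]
        omega
    rw [D_of_ne hzy, D_of_ne h, hmz, ← hmdef]
    omega

lemma D_succ_of_adj {x b y : ∀ i : Fin k, Fin 2} (h : (hierGraph (fun _ => 2) k).Adj x b) :
    D x y ≤ D b y + 1 := by
  obtain ⟨j, hjk, c, hc, hb, hx, hag⟩ := adj_elim h.symm
  exact lip hjk hc hb hx hag y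

lemma walk_le {x y : ∀ i : Fin k, Fin 2} (p : (hierGraph (fun _ => 2) k).Walk x y) :
    D x y ≤ p.length := by
  induction p with
  | nil => rw [D_self]; omega
  | cons h q ih =>
    rw [SimpleGraph.Walk.length_cons]
    refine le_trans (D_succ_of_adj h) ?_
    omega

lemma exists_walk (x y : ∀ i : Fin k, Fin 2) :
    ∃ p : (hierGraph (fun _ => 2) k).Walk x y, p.length ≤ D x y := by
  by_cases h : x = y
  · subst h
    exact ⟨SimpleGraph.Walk.nil, by rw [D_self]; exact le_refl 0⟩
  · obtain ⟨z, hadj, hlt⟩ := step h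
    obtain ⟨p, hp⟩ := exists_walk z y
    exact ⟨SimpleGraph.Walk.cons hadj p, by rw [SimpleGraph.Walk.length_cons]; omega⟩
termination_by D x y
decreasing_by exact hlt

lemma dist_eq_D (x y : ∀ i : Fin k, Fin 2) :
    (hierGraph (fun _ => 2) k).dist x y = D x y := by
  obtain ⟨p, hp⟩ := exists_walk x y
  refine le_antisymm (le_trans (SimpleGraph.dist_le p) hp) ?_
  obtain ⟨q, hq⟩ := (SimpleGraph.Reachable.exists_walk_length_eq_dist ⟨p⟩ :
    ∃ q : (hierGraph (fun _ => 2) k).Walk x y, q.length = _)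
  rw [← hq]
  exact walk_le q

end Stmt8Aux

open Stmt8Aux in
/-- In the binomial tree `H_{2,…,2}` (k copies of 2), if `x_k = 0` then the eccentricity
of `x` equals `alt(x) + k`. -/
theorem stmt_8 (k : ℕ) (hk : 1 ≤ k) (x : ∀ i : Fin k, Fin 2)
    (hxk : (x ⟨k - 1, by omega⟩).val = 0) :
    (Finset.univ.sup fun y : ∀ i : Fin k, Fin 2 =>
        (hierGraph (fun _ => 2) k).dist x y) =
      altNum (fun _ => 2) k x + k := by
  rw [altNum_eq]
  have hx0 : e x (k - 1) = 0 := by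
    rw [e_lt (show k - 1 < k by omega)]
    exact hxk
  -- upper bound
  have upper : ∀ y, D x y ≤ T x k + k := by
    intro y
    by_cases h : x = y
    · rw [h, D_self]; omega
    · rw [D_of_ne h]
      have h1 := mtop_lt h
      have h2 := T_le y (mtop x y)
      have h3 := T_mono x (le_of_lt h1)
      omega
  -- the extremal vertex
  set ys : ∀ i : Fin k, Fin 2 := fun i => if (k - 1 - i.val) % 2 = 0 then 1 else 0 with hysdef
  have he : ∀ i, i < k → e ys i = if (k - 1 - i) % 2 = 0 then 1 else 0 := by
    intro i hik
    rw [e_lt hik, hysdef]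
    by_cases hpar : (k - 1 - i) % 2 = 0
    · rw [if_pos hpar]
      show (if (k - 1 - i) % 2 = 0 then (1 : Fin 2) else 0).val = 1
      rw [if_pos hpar]; rfl
    · rw [if_neg hpar]
      show (if (k - 1 - i) % 2 = 0 then (1 : Fin 2) else 0).val = 0
      rw [if_neg hpar]; rfl
  have hys1 : e ys (k - 1) = 1 := by
    rw [he (k-1) (by omega), if_pos (by omega)]
  have hne : x ≠ ys := by
    intro heq
    rw [heq] at hx0
    omega
  have hm : mtop x ys = k - 1 := by
    refine mtop_eq hne (by omega) (fun i hi => ?_)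
    rw [e_ge (by omega), e_ge (by omega)]
  have hTys : T ys (k - 1) = k - 1 := by
    have hone : ∀ i ∈ Finset.range (k - 1), tt ys i = 1 := by
      intro i hi
      rw [Finset.mem_range] at hi
      have hval : e ys i ≠ e ys (i+1) := by
        rw [he i (by omega), he (i+1) (by omega)]
        have hd : k - 1 - i = (k - 1 - (i+1)) + 1 := by omega
        by_cases hp : (k - 1 - (i+1)) % 2 = 0
        · rw [if_pos hp, if_neg (by omega)]
          omega
        · rw [if_neg hp, if_pos (by omega)]
          omega
      unfold tt
      rw [if_neg hval]
    calc T ys (k - 1) = ∑ i ∈ Finset.range (k - 1), 1 := Finset.sum_congr rfl hone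
    _ = k - 1 := by simp
  have hTx : T x k = T x (k - 1) := by
    have hk1 : k - 1 + 1 = k := by omega
    have hstep : T x ((k-1)+1) = T x (k-1) + tt x (k-1) := Finset.sum_range_succ _ _
    have htt0 : tt x (k-1) = 0 := by
      unfold tt
      rw [hx0, hk1, e_ge (le_refl k), if_pos rfl]
    have heq : T x k = T x ((k-1)+1) := by rw [hk1]
    rw [heq, hstep, htt0]
    omega
  have hDys : D x ys = T x k + k := by
    rw [D_of_ne hne, hm, hTys, hTx]
    omega
  refine le_antisymm (Finset.sup_le (fun y _ => ?_)) ?_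
  · rw [dist_eq_D]
    exact upper y
  · have hle := Finset.le_sup (f := fun y => (hierGraph (fun _ => 2) k).dist x y)
      (Finset.mem_univ ys)
    calc T x k + k = (hierGraph (fun _ => 2) k).dist x ys := by rw [dist_eq_D, hDys]
    _ ≤ _ := hle
end

section
/- Let k ≥ 1 and n_1,…,n_k be integers with each n_i ≥ 2. The diameter of the hierarchical graph H_{n_1,…,n_k} (the maximum graph distance between two vertices) equals 2k − 1. -/
namespace Stmt14
open Finset SimpleGraph

/-! ### Boolean pattern layer -/

def Pb (k i : ℕ) : Bool := decide ((k - i) % 2 = 0)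
def Tb (f : ℕ → Bool) (j : ℕ) : ℕ := if f j ≠ f (j+1) then 1 else 0
def Ab (k : ℕ) (f : ℕ → Bool) : ℕ := ∑ j ∈ Finset.range k, Tb f j
def Sb (k : ℕ) (f : ℕ → Bool) (j : ℕ) : ℕ :=
  if ∀ i ∈ Finset.Ico j k, f i = Pb k i then 1 else 0
def Mb (k : ℕ) (f : ℕ → Bool) : ℕ := ∑ j ∈ Finset.range (k - 1), Sb k f j
def Phib (k : ℕ) (f : ℕ → Bool) : ℤ :=
  (Ab k f : ℤ) + ((k - 1 : ℕ) : ℤ) - 2 * (Mb k f : ℤ)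

lemma pb_alt {k j : ℕ} (h : j + 1 < k) : Pb k j ≠ Pb k (j + 1) := by
  simp only [Pb, ne_eq, decide_eq_decide]
  omega

lemma pb_last {k : ℕ} (h : 1 ≤ k) : Pb k (k - 1) = false := by
  simp only [Pb, decide_eq_false_iff_not]
  omega

lemma tb_le (f : ℕ → Bool) (j : ℕ) : Tb f j ≤ 1 := by
  unfold Tb; split <;> omega

lemma lip1 {k : ℕ} (f g : ℕ → Bool) (hfg : ∀ j, 0 < j → f j = g j) :
    Phib k f ≤ Phib k g + 1 := by
  unfold Phib
  cases k with
  | zero => simp [Ab, Mb]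
  | succ c =>
    have hAf := Finset.sum_range_succ' (Tb f) c
    have hAg := Finset.sum_range_succ' (Tb g) c
    have hT : ∑ j ∈ range c, Tb f (j + 1) = ∑ j ∈ range c, Tb g (j + 1) := by
      refine Finset.sum_congr rfl fun j _ => ?_
      unfold Tb
      rw [hfg (j + 1) (by omega), hfg (j + 2) (by omega)]
    have hA : Ab (c+1) f + Tb g 0 = Ab (c+1) g + Tb f 0 := by
      unfold Ab; rw [hAf, hAg, hT]; ring
    have htf := tb_le f 0
    have htg := tb_le g 0
    cases c with
    | zero =>
      have hM : Mb (0+1) f = Mb (0+1) g := by simp [Mb]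
      rw [hM]; omega
    | succ d =>
      have hMf : Mb (d+1+1) f = ∑ j ∈ range d, Sb (d+1+1) f (j+1) + Sb (d+1+1) f 0 := by
        simpa [Mb] using Finset.sum_range_succ' (Sb (d+1+1) f) d
      have hMg : Mb (d+1+1) g = ∑ j ∈ range d, Sb (d+1+1) g (j+1) + Sb (d+1+1) g 0 := by
        simpa [Mb] using Finset.sum_range_succ' (Sb (d+1+1) g) d
      have hS : ∑ j ∈ range d, Sb (d+1+1) f (j + 1) = ∑ j ∈ range d, Sb (d+1+1) g (j + 1) := by
        refine Finset.sum_congr rfl fun j _ => ?_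
        unfold Sb
        have he : (∀ i ∈ Finset.Ico (j+1) (d+1+1), f i = Pb (d+1+1) i) ↔
            (∀ i ∈ Finset.Ico (j+1) (d+1+1), g i = Pb (d+1+1) i) := by
          refine forall₂_congr fun i hi => ?_
          rw [hfg i (by simp only [Finset.mem_Ico] at hi; omega)]
        rw [if_congr he rfl rfl]
      by_cases hf0 : ∀ i ∈ Finset.Ico 0 (d+1+1), f i = Pb (d+1+1) i
      · have hsf : Sb (d+1+1) f 0 = 1 := by simp only [Sb, if_pos hf0]
        have hsg : Sb (d+1+1) g 0 ≤ 1 := by unfold Sb; split <;> omega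
        omega
      · by_cases hg0 : ∀ i ∈ Finset.Ico 0 (d+1+1), g i = Pb (d+1+1) i
        · have hsf : Sb (d+1+1) f 0 = 0 := by simp only [Sb, if_neg hf0]
          have hsg : Sb (d+1+1) g 0 = 1 := by simp only [Sb, if_pos hg0]
          have hg00 : g 0 = Pb (d+1+1) 0 := hg0 0 (by simp)
          have hg1 : g 1 = Pb (d+1+1) 1 := hg0 1 (by simp)
          have hf1 : f 1 = g 1 := hfg 1 (by omega)
          have hfne : f 0 ≠ Pb (d+1+1) 0 := by
            intro hcon
            apply hf0
            intro i hi
            rcases Nat.eq_zero_or_pos i with h0 | h0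
            · subst h0; exact hcon
            · rw [hfg i h0]; exact hg0 i hi
          have halt : Pb (d+1+1) 0 ≠ Pb (d+1+1) 1 := pb_alt (by omega)
          have hTf : Tb f 0 = 0 := by
            have hff : f 0 = f 1 := by
              rw [hf1, hg1]
              revert hfne halt
              cases f 0 <;> cases Pb (d+1+1) 0 <;> cases Pb (d+1+1) 1 <;> simp
            simp [Tb, hff]
          have hTg : Tb g 0 = 1 := by
            have hgg : g 0 ≠ g 1 := by rw [hg00, hg1]; exact halt
            simp [Tb, hgg]
          omega
        · have hsf : Sb (d+1+1) f 0 = 0 := by simp only [Sb, if_neg hf0]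
          have hsg : Sb (d+1+1) g 0 = 0 := by simp only [Sb, if_neg hg0]
          omega


lemma lip2 {k t : ℕ} (f g : ℕ → Bool) (ht1 : 1 ≤ t) (ht2 : t ≤ k)
    (hf0 : ∀ i, i < t → f i = false) (hg1 : ∀ i, i < t → g i = true)
    (he : ∀ j, t ≤ j → f j = g j) :
    Phib k f ≤ Phib k g + 1 ∧ Phib k g ≤ Phib k f + 1 := by
  obtain ⟨s, rfl⟩ : ∃ s, t = s + 1 := ⟨t - 1, by omega⟩
  -- A part
  have hsplitA : ∀ h : ℕ → Bool, Ab k h = ∑ j ∈ range (s+1), Tb h j + ∑ j ∈ Ico (s+1) k, Tb h j := by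
    intro h
    unfold Ab
    rw [range_eq_Ico, ← Finset.sum_Ico_consecutive _ (by omega : 0 ≤ s+1) (by omega : s+1 ≤ k),
      ← range_eq_Ico]
  have htail : ∑ j ∈ Ico (s+1) k, Tb f j = ∑ j ∈ Ico (s+1) k, Tb g j := by
    refine Finset.sum_congr rfl fun j hj => ?_
    simp only [mem_Ico] at hj
    unfold Tb
    rw [he j (by omega), he (j+1) (by omega)]
  have hheadf : ∑ j ∈ range (s+1), Tb f j = Tb f s := by
    rw [Finset.sum_range_succ]
    have h0 : ∑ j ∈ range s, Tb f j = 0 := by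
      refine Finset.sum_eq_zero fun j hj => ?_
      simp only [mem_range] at hj
      simp [Tb, hf0 j (by omega), hf0 (j+1) (by omega)]
    omega
  have hheadg : ∑ j ∈ range (s+1), Tb g j = Tb g s := by
    rw [Finset.sum_range_succ]
    have h0 : ∑ j ∈ range s, Tb g j = 0 := by
      refine Finset.sum_eq_zero fun j hj => ?_
      simp only [mem_range] at hj
      simp [Tb, hg1 j (by omega), hg1 (j+1) (by omega)]
    omega
  have hAf : Ab k f = Tb f s + ∑ j ∈ Ico (s+1) k, Tb g j := by
    rw [hsplitA, hheadf, htail]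
  have hAg : Ab k g = Tb g s + ∑ j ∈ Ico (s+1) k, Tb g j := by
    rw [hsplitA, hheadg]
  have hfs : f s = false := hf0 s (by omega)
  have hgs : g s = true := hg1 s (by omega)
  have hfs1 : f (s+1) = g (s+1) := he (s+1) (by omega)
  have hTsum : Tb f s + Tb g s = 1 := by
    unfold Tb
    rw [hfs, hfs1, hgs]
    cases g (s+1) <;> simp
  -- M part
  have hSzero : ∀ (h : ℕ → Bool) (b : Bool), (∀ i, i < s + 1 → h i = b) →
      ∀ j, j < s → j + 1 < k → Sb k h j = 0 := by
    intro h b hb j hj hjk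
    unfold Sb
    rw [if_neg]
    intro H
    have e1 := H j (by simp only [mem_Ico]; omega)
    have e2 := H (j+1) (by simp only [mem_Ico]; omega)
    rw [hb j (by omega)] at e1
    rw [hb (j+1) (by omega)] at e2
    exact pb_alt hjk (e1.symm.trans e2)
  have hf0' : ∀ i, i < s + 1 → f i = false := hf0
  have hg1' : ∀ i, i < s + 1 → g i = true := hg1
  rcases Nat.lt_or_ge s (k - 1) with hsk | hsk
  case inr =>
    -- t = k : all M terms vanish
    have hMf : Mb k f = 0 := by
      unfold Mb
      exact Finset.sum_eq_zero fun j hj => hSzero f false hf0' j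
        (by simp only [mem_range] at hj; omega) (by simp only [mem_range] at hj; omega)
    have hMg : Mb k g = 0 := by
      unfold Mb
      exact Finset.sum_eq_zero fun j hj => hSzero g true hg1' j
        (by simp only [mem_range] at hj; omega) (by simp only [mem_range] at hj; omega)
    unfold Phib
    rw [hMf, hMg, hAf, hAg]
    omega
  case inl =>
    -- s + 1 < k
    have hsplitM : ∀ h : ℕ → Bool, (∀ j, j < s → Sb k h j = 0) →
        Mb k h = Sb k h s + ∑ j ∈ Ico (s+1) (k-1), Sb k h j := by
      intro h hz
      unfold Mb
      rw [range_eq_Ico, ← Finset.sum_Ico_consecutive _ (by omega : 0 ≤ s+1)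
        (by omega : s+1 ≤ k-1), ← range_eq_Ico, Finset.sum_range_succ,
        Finset.sum_eq_zero (fun j hj => hz j (by simp only [mem_range] at hj; omega)), zero_add]
    have hMf : Mb k f = Sb k f s + ∑ j ∈ Ico (s+1) (k-1), Sb k f j :=
      hsplitM f (fun j hj => hSzero f false hf0' j hj (by omega))
    have hMg : Mb k g = Sb k g s + ∑ j ∈ Ico (s+1) (k-1), Sb k g j :=
      hsplitM g (fun j hj => hSzero g true hg1' j hj (by omega))
    have hMtail : ∑ j ∈ Ico (s+1) (k-1), Sb k f j = ∑ j ∈ Ico (s+1) (k-1), Sb k g j := by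
      refine Finset.sum_congr rfl fun j hj => ?_
      simp only [mem_Ico] at hj
      unfold Sb
      refine if_congr (forall₂_congr fun i hi => ?_) rfl rfl
      simp only [mem_Ico] at hi
      rw [he i (by omega)]
    -- analyze the terms at s
    have hIcoSplit : ∀ h : ℕ → Bool,
        (∀ i ∈ Finset.Ico s k, h i = Pb k i) ↔
          (h s = Pb k s ∧ ∀ i ∈ Finset.Ico (s+1) k, h i = Pb k i) := by
      intro h
      constructor
      · intro H
        exact ⟨H s (by simp only [mem_Ico]; omega), fun i hi => H i
          (by simp only [mem_Ico] at hi ⊢; omega)⟩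
      · rintro ⟨h1, h2⟩ i hi
        simp only [mem_Ico] at hi
        rcases Nat.eq_or_lt_of_le hi.1 with rfl | hlt
        · exact h1
        · exact h2 i (by simp only [mem_Ico]; omega)
    by_cases hR : ∀ i ∈ Finset.Ico (s+1) k, g i = Pb k i
    case neg =>
      have hRf : ¬ ∀ i ∈ Finset.Ico (s+1) k, f i = Pb k i := by
        intro H
        exact hR fun i hi => by
          rw [← he i (by simp only [mem_Ico] at hi; omega)]; exact H i hi
      have hSf : Sb k f s = 0 := by
        unfold Sb
        rw [if_neg]
        intro H
        exact hRf ((hIcoSplit f).mp H).2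
      have hSg : Sb k g s = 0 := by
        unfold Sb
        rw [if_neg]
        intro H
        exact hR ((hIcoSplit g).mp H).2
      unfold Phib
      rw [hMf, hMg, hMtail, hSf, hSg, hAf, hAg]
      omega
    case pos =>
      have hRf : ∀ i ∈ Finset.Ico (s+1) k, f i = Pb k i := fun i hi => by
        rw [he i (by simp only [mem_Ico] at hi; omega)]; exact hR i hi
      have hb : g (s+1) = Pb k (s+1) := hR (s+1) (by simp only [mem_Ico]; omega)
      have halt : Pb k s ≠ Pb k (s+1) := pb_alt (by omega)
      by_cases hPs : Pb k s = true
      case pos =>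
        have hPs1 : Pb k (s+1) = false := by
          cases hq : Pb k (s+1)
          · rfl
          · exact absurd (hPs.trans hq.symm) halt
        have hSf : Sb k f s = 0 := by
          unfold Sb
          rw [if_neg]
          intro H
          have := ((hIcoSplit f).mp H).1
          rw [hfs, hPs] at this
          exact Bool.false_ne_true this
        have hSg : Sb k g s = 1 := by
          unfold Sb
          rw [if_pos ((hIcoSplit g).mpr ⟨by rw [hgs, hPs], hR⟩)]
        have hTf : Tb f s = 0 := by
          simp [Tb, hfs, hfs1, hb, hPs1]
        have hTg : Tb g s = 1 := by
          simp [Tb, hgs, hb, hPs1]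
        unfold Phib
        rw [hMf, hMg, hMtail, hSf, hSg, hAf, hAg, hTf, hTg]
        omega
      case neg =>
        have hPs0 : Pb k s = false := by
          cases hq : Pb k s
          · rfl
          · exact absurd hq hPs
        have hPs1 : Pb k (s+1) = true := by
          cases hq : Pb k (s+1)
          · rw [hPs0] at halt; exact absurd hq.symm (by simpa using halt)
          · rfl
        have hSf : Sb k f s = 1 := by
          unfold Sb
          rw [if_pos ((hIcoSplit f).mpr ⟨by rw [hfs, hPs0], hRf⟩)]
        have hSg : Sb k g s = 0 := by
          unfold Sb
          rw [if_neg]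
          intro H
          have := ((hIcoSplit g).mp H).1
          rw [hgs, hPs0] at this
          simp at this
        have hTf : Tb f s = 1 := by
          simp [Tb, hfs, hfs1, hb, hPs1]
        have hTg : Tb g s = 0 := by
          simp [Tb, hgs, hb, hPs1]
        unfold Phib
        rw [hMf, hMg, hMtail, hSf, hSg, hAf, hAg, hTf, hTg]
        omega

lemma phib_vpat {k : ℕ} (hk : 1 ≤ k) (f : ℕ → Bool)
    (hf : ∀ j, j < k → f j = Pb k j) (hfk : ∀ j, k ≤ j → f j = false) :
    Phib k f = 0 := by
  obtain ⟨c, rfl⟩ : ∃ c, k = c + 1 := ⟨k - 1, by omega⟩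
  have hA : Ab (c+1) f = c := by
    unfold Ab
    rw [Finset.sum_range_succ]
    have h1 : ∑ j ∈ range c, Tb f j = ∑ j ∈ range c, 1 := by
      refine Finset.sum_congr rfl fun j hj => ?_
      simp only [mem_range] at hj
      have halt := pb_alt (by omega : j + 1 < c + 1)
      rw [Tb, if_pos]
      rw [hf j (by omega), hf (j+1) (by omega)]
      exact halt
    have h2 : Tb f c = 0 := by
      have hc1 : f c = false := by
        rw [hf c (by omega)]
        simpa using pb_last (by omega : 1 ≤ c + 1)
      have hc2 : f (c+1) = false := hfk (c+1) (by omega)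
      simp [Tb, hc1, hc2]
    rw [h1, h2, Finset.sum_const, smul_eq_mul, mul_one]
    simp
  have hM : Mb (c+1) f = c := by
    unfold Mb
    have h1 : ∀ j ∈ range (c + 1 - 1), Sb (c+1) f j = 1 := by
      intro j hj
      rw [Sb, if_pos]
      intro i hi
      simp only [mem_Ico] at hi
      exact hf i hi.2
    rw [Finset.sum_congr rfl h1, Finset.sum_const, smul_eq_mul, mul_one]
    simp
  rw [Phib, hA, hM]
  push_cast [Nat.add_sub_cancel]
  ring

lemma phib_upat {k : ℕ} (hk : 1 ≤ k) (f : ℕ → Bool)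
    (hf : ∀ j, j < k → f j = !(Pb k j)) (hfk : ∀ j, k ≤ j → f j = false) :
    Phib k f = 2 * (k : ℤ) - 1 := by
  obtain ⟨c, rfl⟩ : ∃ c, k = c + 1 := ⟨k - 1, by omega⟩
  have hA : Ab (c+1) f = c + 1 := by
    unfold Ab
    rw [Finset.sum_range_succ]
    have h1 : ∑ j ∈ range c, Tb f j = ∑ j ∈ range c, 1 := by
      refine Finset.sum_congr rfl fun j hj => ?_
      simp only [mem_range] at hj
      have halt := pb_alt (by omega : j + 1 < c + 1)
      rw [Tb, if_pos]
      rw [hf j (by omega), hf (j+1) (by omega)]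
      simp only [ne_eq, Bool.not_inj_iff]
      exact halt
    have h2 : Tb f c = 1 := by
      have hc1 : f c = true := by
        rw [hf c (by omega)]
        have := pb_last (by omega : 1 ≤ c + 1)
        simp only [Nat.add_sub_cancel] at this
        rw [this]
        rfl
      have hc2 : f (c+1) = false := hfk (c+1) (by omega)
      simp [Tb, hc1, hc2]
    rw [h1, h2, Finset.sum_const, smul_eq_mul, mul_one]
    simp
  have hM : Mb (c+1) f = 0 := by
    unfold Mb
    refine Finset.sum_eq_zero fun j hj => ?_
    simp only [mem_range] at hj
    rw [Sb, if_neg]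
    intro H
    have hlast := H c (by simp only [mem_Ico]; omega)
    have h1 : f c = true := by
      rw [hf c (by omega)]
      have := pb_last (by omega : 1 ≤ c + 1)
      simp only [Nat.add_sub_cancel] at this
      rw [this]; rfl
    have h2 : Pb (c+1) c = false := by
      have := pb_last (by omega : 1 ≤ c + 1)
      simpa using this
    rw [h1, h2] at hlast
    simp at hlast
  rw [Phib, hA, hM]
  push_cast [Nat.add_sub_cancel]
  ring



section GraphLayer

variable {n : ℕ → ℕ} {k : ℕ}

lemma extVal_lt {x : ∀ i : Fin k, Fin (n i)} {j : ℕ} (h : j < k) :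
    extVal n k x j = (x ⟨j, h⟩).val := dif_pos h

lemma extVal_ge {x : ∀ i : Fin k, Fin (n i)} {j : ℕ} (h : k ≤ j) :
    extVal n k x j = 0 := dif_neg (by omega)

lemma extVal_fin (x : ∀ i : Fin k, Fin (n i)) (i : Fin k) :
    extVal n k x i.val = (x i).val := by
  rw [extVal_lt i.isLt]

-- adjacency helpers
lemma adj_A1 {x y : ∀ i : Fin k, Fin (n i)} (hne : x ≠ y)
    (h : ∀ i : Fin k, 0 < i.val → x i = y i) : (hierGraph n k).Adj x y :=
  ⟨hne, Or.inl h⟩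

lemma adj_A2 {x y : ∀ i : Fin k, Fin (n i)} {j : ℕ} (hj : j < k)
    (hx0 : ∀ i : Fin k, i.val ≤ j → (x i).val = 0)
    (hy0 : ∀ i : Fin k, i.val ≤ j → (y i).val ≠ 0)
    (hag : ∀ i : Fin k, j < i.val → x i = y i) : (hierGraph n k).Adj x y := by
  have hne : x ≠ y := by
    intro he
    have h1 := hx0 ⟨j, hj⟩ (le_refl j)
    have h2 := hy0 ⟨j, hj⟩ (le_refl j)
    rw [he] at h1
    exact h2 h1
  exact ⟨hne, Or.inr (Or.inl ⟨⟨j, hj⟩, Or.inl ⟨hx0, hy0⟩, hag⟩)⟩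

lemma adj_A3 {x y : ∀ i : Fin k, Fin (n i)} {m : ℕ} (hm0 : 0 < m) (hm : m < k)
    (hpre : ∀ i : Fin k, i.val < m → (x i).val = 0 ∧ (y i).val = 0)
    (hxm : (x ⟨m, hm⟩).val ≠ 0) (hym : (y ⟨m, hm⟩).val ≠ 0)
    (hne : x ⟨m, hm⟩ ≠ y ⟨m, hm⟩)
    (hag : ∀ i : Fin k, m < i.val → x i = y i) : (hierGraph n k).Adj x y :=
  ⟨fun he => hne (congrFun he _), Or.inr (Or.inr ⟨⟨m, hm⟩, hm0, hpre, hxm, hym, hne, hag⟩)⟩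



def zpat (n : ℕ → ℕ) (k : ℕ) (x : ∀ i : Fin k, Fin (n i)) : ℕ → Bool :=
  fun j => decide (extVal n k x j ≠ 0)

def zb (hp : ∀ i : Fin k, 0 < n i) (t : ℕ) (x : ∀ i : Fin k, Fin (n i)) :
    ∀ i : Fin k, Fin (n i) :=
  fun i => if i.val < t then ⟨0, hp i⟩ else x i

def zpt (n : ℕ → ℕ) (k : ℕ) (t : ℕ) (x : ∀ i : Fin k, Fin (n i)) : ℕ → Bool :=
  fun j => if j < t then zpat n k x j else false

def alpha (n : ℕ → ℕ) (k : ℕ) (t : ℕ) (x : ∀ i : Fin k, Fin (n i)) : ℕ :=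
  ∑ j ∈ Finset.range t, Tb (zpt n k t x) j

lemma alpha_le (t : ℕ) (x : ∀ i : Fin k, Fin (n i)) : alpha n k t x ≤ t := by
  unfold alpha
  calc ∑ j ∈ Finset.range t, Tb (zpt n k t x) j ≤ ∑ _j ∈ Finset.range t, 1 :=
        Finset.sum_le_sum fun j _ => tb_le _ j
    _ = t := by simp

lemma zpt_lt {t j : ℕ} (h : j < t) (x : ∀ i : Fin k, Fin (n i)) :
    zpt n k t x j = zpat n k x j := if_pos h

lemma zpt_ge {t j : ℕ} (h : t ≤ j) (x : ∀ i : Fin k, Fin (n i)) :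
    zpt n k t x j = false := if_neg (by omega)

lemma alpha_jump {t q : ℕ} (u : ∀ i : Fin k, Fin (n i)) (hq : q + 1 < t) (htk : t ≤ k)
    (hq2 : extVal n k u q = 0)
    (hq3 : ∀ j, q < j → j < t → extVal n k u j ≠ 0) :
    alpha n k (q+1) u + 2 ≤ alpha n k t u := by
  have hTeq : ∀ j, j < q → Tb (zpt n k (q+1) u) j = Tb (zpt n k t u) j := by
    intro j hj
    unfold Tb
    rw [zpt_lt (t := q+1) (by omega) u, zpt_lt (t := q+1) (by omega) u,
      zpt_lt (t := t) (by omega) u, zpt_lt (t := t) (by omega) u]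
  have hA1 : alpha n k (q+1) u = ∑ j ∈ Finset.range q, Tb (zpt n k t u) j := by
    unfold alpha
    rw [Finset.sum_range_succ]
    have hTbq : Tb (zpt n k (q+1) u) q = 0 := by
      have e1 : zpt n k (q+1) u q = false := by
        rw [zpt_lt (by omega) u]
        simp [zpat, hq2]
      have e2 : zpt n k (q+1) u (q+1) = false := zpt_ge (le_refl _) u
      simp [Tb, e1, e2]
    rw [hTbq, add_zero]
    exact Finset.sum_congr rfl fun j hj => hTeq j (Finset.mem_range.mp hj)
  have hTq1 : Tb (zpt n k t u) q = 1 := by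
    have e1 : zpt n k t u q = false := by
      rw [zpt_lt (by omega) u]; simp [zpat, hq2]
    have e2 : zpt n k t u (q+1) = true := by
      rw [zpt_lt (by omega) u]
      simp [zpat]
      exact hq3 (q+1) (by omega) (by omega)
    simp [Tb, e1, e2]
  have hTlast : Tb (zpt n k t u) (t-1) = 1 := by
    have e1 : zpt n k t u (t-1) = true := by
      rw [zpt_lt (by omega) u]
      simp [zpat]
      exact hq3 (t-1) (by omega) (by omega)
    have e2 : zpt n k t u (t-1+1) = false := by
      rw [show t - 1 + 1 = t by omega]
      exact zpt_ge (le_refl _) u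
    simp [Tb, e1, e2]
  have hsplit : alpha n k t u =
      ∑ j ∈ Finset.range (q+1), Tb (zpt n k t u) j +
        ∑ j ∈ Finset.Ico (q+1) t, Tb (zpt n k t u) j := by
    unfold alpha
    rw [Finset.range_eq_Ico,
      ← Finset.sum_Ico_consecutive _ (by omega : 0 ≤ q+1) (by omega : q+1 ≤ t),
      ← Finset.range_eq_Ico]
  have htailge : Tb (zpt n k t u) (t-1) ≤ ∑ j ∈ Finset.Ico (q+1) t, Tb (zpt n k t u) j :=
    Finset.single_le_sum (fun j _ => Nat.zero_le _)
      (by simp only [Finset.mem_Ico]; omega)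
  rw [Finset.sum_range_succ, hTq1] at hsplit
  omega

lemma alpha_stable {t p : ℕ} (u : ∀ i : Fin k, Fin (n i)) (hpt : p + 1 ≤ t) (htk : t ≤ k)
    (hp3 : ∀ j, p < j → j < t → extVal n k u j = 0) :
    alpha n k t u = alpha n k (p+1) u := by
  have hzpt : ∀ j, j ≤ t → zpt n k t u j = zpt n k (p+1) u j := by
    intro j hj
    rcases Nat.lt_or_ge j (p+1) with h1 | h1
    · rw [zpt_lt (by omega) u, zpt_lt h1 u]
    · rw [zpt_ge h1 u]
      rcases Nat.lt_or_ge j t with h2 | h2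
      · rw [zpt_lt h2 u]
        simp [zpat]
        exact hp3 j (by omega) h2
      · rw [zpt_ge h2 u]
  have hsplit : alpha n k t u =
      ∑ j ∈ Finset.range (p+1), Tb (zpt n k t u) j +
        ∑ j ∈ Finset.Ico (p+1) t, Tb (zpt n k t u) j := by
    unfold alpha
    rw [Finset.range_eq_Ico,
      ← Finset.sum_Ico_consecutive _ (by omega : 0 ≤ p+1) (by omega : p+1 ≤ t),
      ← Finset.range_eq_Ico]
  have htail : ∑ j ∈ Finset.Ico (p+1) t, Tb (zpt n k t u) j = 0 := by
    refine Finset.sum_eq_zero fun j hj => ?_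
    simp only [Finset.mem_Ico] at hj
    have e1 : zpt n k t u j = false := by
      rw [zpt_lt (by omega) u]
      simp [zpat]
      exact hp3 j (by omega) (by omega)
    have e2 : zpt n k t u (j+1) = false := by
      rcases Nat.lt_or_ge (j+1) t with h2 | h2
      · rw [zpt_lt h2 u]
        simp [zpat]
        exact hp3 (j+1) (by omega) h2
      · exact zpt_ge h2 u
    simp [Tb, e1, e2]
  have hhead : ∑ j ∈ Finset.range (p+1), Tb (zpt n k t u) j = alpha n k (p+1) u := by
    unfold alpha
    refine Finset.sum_congr rfl fun j hj => ?_
    simp only [Finset.mem_range] at hj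
    unfold Tb
    rw [hzpt j (by omega), hzpt (j+1) (by omega)]
  omega


lemma claimAB (hp : ∀ i : Fin k, 0 < n i) (h2 : ∀ i : Fin k, 2 ≤ n i) :
    ∀ t, t ≤ k →
      (∀ u : ∀ i : Fin k, Fin (n i), 1 ≤ t → extVal n k u (t-1) ≠ 0 →
        ∃ x, (∀ i : Fin k, i.val < t → (x i).val ≠ 0) ∧
          (∀ i : Fin k, t ≤ i.val → x i = u i) ∧
          ∃ w : (hierGraph n k).Walk u x, w.length + 1 ≤ alpha n k t u) ∧
      (∀ u : ∀ i : Fin k, Fin (n i),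
        ∃ w : (hierGraph n k).Walk u (zb hp t u), w.length ≤ alpha n k t u) := by
  intro t
  induction t using Nat.strong_induction_on with
  | _ t IH =>
    intro ht
    have hB : ∀ u : ∀ i : Fin k, Fin (n i), 1 ≤ t → extVal n k u (t-1) ≠ 0 →
        ∃ x, (∀ i : Fin k, i.val < t → (x i).val ≠ 0) ∧
          (∀ i : Fin k, t ≤ i.val → x i = u i) ∧
          ∃ w : (hierGraph n k).Walk u x, w.length + 1 ≤ alpha n k t u := by
      intro u ht1 hut
      by_cases hall : ∀ i : Fin k, i.val < t → (u i).val ≠ 0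
      · refine ⟨u, hall, fun _ _ => rfl, SimpleGraph.Walk.nil, ?_⟩
        have hTb : Tb (zpt n k t u) (t-1) = 1 := by
          have h1 : zpt n k t u (t-1) = true := by
            rw [zpt_lt (by omega) u]
            simp [zpat]
            exact hut
          have h0 : zpt n k t u (t-1+1) = false := by
            rw [show t - 1 + 1 = t by omega]
            exact zpt_ge (le_refl _) u
          simp [Tb, h1, h0]
        have hle : 1 ≤ alpha n k t u := by
          calc 1 = Tb (zpt n k t u) (t-1) := hTb.symm
            _ ≤ alpha n k t u := Finset.single_le_sum (fun j _ => Nat.zero_le _)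
                (by simp only [Finset.mem_range]; omega)
        simpa using hle
      · push_neg at hall
        obtain ⟨i0, hi0lt, hi0⟩ := hall
        have hSne : ((Finset.range t).filter (fun j => extVal n k u j = 0)).Nonempty := by
          refine ⟨i0.val, ?_⟩
          simp only [Finset.mem_filter, Finset.mem_range]
          exact ⟨hi0lt, by rw [extVal_fin]; exact hi0⟩
        set q := ((Finset.range t).filter (fun j => extVal n k u j = 0)).max' hSne with hqdef
        have hqmem := Finset.max'_mem _ hSne
        rw [← hqdef] at hqmem
        simp only [Finset.mem_filter, Finset.mem_range] at hqmem
        obtain ⟨hq1, hq2⟩ := hqmem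
        have hq3 : ∀ j, q < j → j < t → extVal n k u j ≠ 0 := by
          intro j hqj hjt hje
          have : j ≤ q := Finset.le_max' _ j
            (by simp only [Finset.mem_filter, Finset.mem_range]; exact ⟨hjt, hje⟩)
          omega
        have hqt : q < t - 1 := by
          have : q ≠ t - 1 := fun he => hut (he ▸ hq2)
          omega
        obtain ⟨wA, hwA⟩ := (IH (q+1) (by omega) (by omega)).2 u
        set x : ∀ i : Fin k, Fin (n i) :=
          (fun i => if i.val ≤ q then (⟨1, by have := h2 i; omega⟩ : Fin (n i)) else u i)
          with hxdef
        have hadj : (hierGraph n k).Adj (zb hp (q+1) u) x := by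
          refine adj_A2 (j := q) (by omega) ?_ ?_ ?_
          · intro i hi
            simp only [zb, if_pos (show i.val < q+1 by omega)]
          · intro i hi
            simp only [hxdef, if_pos hi]
            omega
          · intro i hi
            simp only [zb, hxdef, if_neg (show ¬ i.val < q+1 by omega),
              if_neg (show ¬ i.val ≤ q by omega)]
        refine ⟨x, ?_, ?_,
          wA.append (SimpleGraph.Walk.cons hadj SimpleGraph.Walk.nil), ?_⟩
        · intro i hit
          by_cases hiq : i.val ≤ q
          · simp only [hxdef, if_pos hiq]
            omega
          · have hxu : x i = u i := by simp only [hxdef, if_neg hiq]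
            rw [hxu, ← extVal_fin]
            exact hq3 i.val (by omega) hit
        · intro i hit
          simp only [hxdef, if_neg (show ¬ i.val ≤ q by omega)]
        · rw [SimpleGraph.Walk.length_append, SimpleGraph.Walk.length_cons,
            SimpleGraph.Walk.length_nil]
          have key := alpha_jump u (show q + 1 < t by omega) ht hq2 hq3
          omega
    refine ⟨hB, ?_⟩
    intro u
    by_cases hz : ∀ i : Fin k, i.val < t → (u i).val = 0
    · have hzb : zb hp t u = u := by
        funext i
        unfold zb
        split
        · exact Fin.val_injective (by simpa using (hz i (by assumption)).symm)
        · rfl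
      exact ⟨SimpleGraph.Walk.nil.copy rfl hzb.symm, by simp⟩
    · push_neg at hz
      obtain ⟨i0, hi0lt, hi0⟩ := hz
      have hSne : ((Finset.range t).filter (fun j => extVal n k u j ≠ 0)).Nonempty := by
        refine ⟨i0.val, ?_⟩
        simp only [Finset.mem_filter, Finset.mem_range]
        exact ⟨hi0lt, by rw [extVal_fin]; exact hi0⟩
      set p := ((Finset.range t).filter (fun j => extVal n k u j ≠ 0)).max' hSne with hpdef
      have hpmem := Finset.max'_mem _ hSne
      rw [← hpdef] at hpmem
      simp only [Finset.mem_filter, Finset.mem_range] at hpmem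
      obtain ⟨hp1, hp2⟩ := hpmem
      have hp3 : ∀ j, p < j → j < t → extVal n k u j = 0 := by
        intro j hpj hjt
        by_contra hje
        have : j ≤ p := Finset.le_max' _ j
          (by simp only [Finset.mem_filter, Finset.mem_range]; exact ⟨hjt, hje⟩)
        omega
      have hBp : ∃ x, (∀ i : Fin k, i.val < p + 1 → (x i).val ≠ 0) ∧
          (∀ i : Fin k, p + 1 ≤ i.val → x i = u i) ∧
          ∃ w : (hierGraph n k).Walk u x, w.length + 1 ≤ alpha n k (p+1) u := by
        rcases Nat.eq_or_lt_of_le (show p + 1 ≤ t by omega) with he | hlt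
        · obtain ⟨x, hx1, hx2, w, hw⟩ := hB u (by omega)
            (by rw [show t - 1 = p by omega]; exact hp2)
          exact ⟨x, fun i hi => hx1 i (by omega), fun i hi => hx2 i (by omega),
            w, he ▸ hw⟩
        · exact (IH (p+1) hlt (by omega)).1 u (by omega)
            (by rw [show p + 1 - 1 = p by omega]; exact hp2)
      obtain ⟨x, hx1, hx2, w, hw⟩ := hBp
      have hzb : zb hp (p+1) u = zb hp t u := by
        funext i
        unfold zb
        by_cases h1 : i.val < p + 1
        · rw [if_pos h1, if_pos (by omega)]
        · rw [if_neg h1]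
          by_cases hh2 : i.val < t
          · rw [if_pos hh2]
            apply Fin.val_injective
            have : extVal n k u i.val = 0 := hp3 i.val (by omega) hh2
            rw [extVal_fin] at this
            simpa using this
          · rw [if_neg hh2]
      have halpha : alpha n k t u = alpha n k (p+1) u :=
        alpha_stable u (by omega) ht hp3
      have hadj : (hierGraph n k).Adj x (zb hp (p+1) u) := by
        refine ((adj_A2 (j := p) (by omega) ?_ ?_ ?_) :
          (hierGraph n k).Adj (zb hp (p+1) u) x).symm
        · intro i hi
          simp only [zb, if_pos (show i.val < p+1 by omega)]
        · intro i hi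
          exact hx1 i (by omega)
        · intro i hi
          rw [show zb hp (p+1) u i = u i from if_neg (by omega), hx2 i (by omega)]
      refine ⟨(w.append (SimpleGraph.Walk.cons hadj SimpleGraph.Walk.nil)).copy rfl hzb, ?_⟩
      rw [SimpleGraph.Walk.length_copy, SimpleGraph.Walk.length_append,
        SimpleGraph.Walk.length_cons, SimpleGraph.Walk.length_nil, halpha]
      omega


lemma exists_short_walk (hp : ∀ i : Fin k, 0 < n i) (h2 : ∀ i : Fin k, 2 ≤ n i)
    (hk : 1 ≤ k) (u v : ∀ i : Fin k, Fin (n i)) :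
    ∃ w : (hierGraph n k).Walk u v, w.length ≤ 2 * k - 1 := by
  have claimA : ∀ t, t ≤ k → ∀ a : ∀ i : Fin k, Fin (n i),
      ∃ w : (hierGraph n k).Walk a (zb hp t a), w.length ≤ t := by
    intro t ht a
    obtain ⟨w, hw⟩ := (claimAB hp h2 t ht).2 a
    exact ⟨w, le_trans hw (alpha_le t a)⟩
  by_cases hk1 : k = 1
  · subst hk1
    by_cases huv : u = v
    · exact ⟨SimpleGraph.Walk.nil.copy rfl huv, by simp⟩
    · refine ⟨SimpleGraph.Walk.cons (adj_A1 huv fun i hi => absurd hi (by omega))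
        SimpleGraph.Walk.nil, by simp⟩
  · have hk2 : 2 ≤ k := by omega
    have hmain : ∀ a b : ∀ i : Fin k, Fin (n i), extVal n k a (k-1) = 0 →
        ∃ w : (hierGraph n k).Walk a b, w.length ≤ 2 * k - 1 := by
      intro a b ha
      obtain ⟨wa, hwa⟩ := claimA (k-1) (by omega) a
      obtain ⟨wb, hwb⟩ := claimA k (le_refl k) b
      have hzz : zb hp (k-1) a = zb hp k b := by
        funext i
        unfold zb
        by_cases h1 : i.val < k - 1
        · rw [if_pos h1, if_pos i.isLt]
        · rw [if_neg h1, if_pos i.isLt]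
          apply Fin.val_injective
          have hie : i.val = k - 1 := by have := i.isLt; omega
          have : extVal n k a i.val = 0 := by rw [hie]; exact ha
          rw [extVal_fin] at this
          simpa using this
      refine ⟨(wa.copy rfl hzz).append wb.reverse, ?_⟩
      rw [SimpleGraph.Walk.length_append, SimpleGraph.Walk.length_copy,
        SimpleGraph.Walk.length_reverse]
      omega
    by_cases hu : extVal n k u (k-1) = 0
    · exact hmain u v hu
    · by_cases hv : extVal n k v (k-1) = 0
      · obtain ⟨w, hw⟩ := hmain v u hv
        exact ⟨w.reverse, by rwa [SimpleGraph.Walk.length_reverse]⟩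
      · obtain ⟨wa, hwa⟩ := claimA (k-1) (by omega) u
        obtain ⟨wb, hwb⟩ := claimA (k-1) (by omega) v
        have hkk : k - 1 < k := by omega
        have huval : (u ⟨k-1, hkk⟩).val ≠ 0 := by rwa [← extVal_lt hkk]
        have hvval : (v ⟨k-1, hkk⟩).val ≠ 0 := by rwa [← extVal_lt hkk]
        by_cases heq : u ⟨k-1, hkk⟩ = v ⟨k-1, hkk⟩
        · have hzz : zb hp (k-1) u = zb hp (k-1) v := by
            funext i
            unfold zb
            by_cases h1 : i.val < k - 1
            · rw [if_pos h1, if_pos h1]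
            · rw [if_neg h1, if_neg h1]
              have hie : i = ⟨k-1, hkk⟩ := Fin.val_injective (by have := i.isLt; simp; omega)
              rw [hie]
              exact heq
          refine ⟨(wa.copy rfl hzz).append wb.reverse, ?_⟩
          rw [SimpleGraph.Walk.length_append, SimpleGraph.Walk.length_copy,
            SimpleGraph.Walk.length_reverse]
          omega
        · have hadj : (hierGraph n k).Adj (zb hp (k-1) u) (zb hp (k-1) v) := by
            refine adj_A3 (m := k-1) (by omega) hkk ?_ ?_ ?_ ?_ ?_
            · intro i hi
              constructor <;> simp [zb, if_pos hi]
            · show ((zb hp (k-1) u) ⟨k-1, hkk⟩).val ≠ 0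
              rw [show (zb hp (k-1) u) ⟨k-1, hkk⟩ = u ⟨k-1, hkk⟩ from if_neg (by simp)]
              exact huval
            · show ((zb hp (k-1) v) ⟨k-1, hkk⟩).val ≠ 0
              rw [show (zb hp (k-1) v) ⟨k-1, hkk⟩ = v ⟨k-1, hkk⟩ from if_neg (by simp)]
              exact hvval
            · rw [show (zb hp (k-1) u) ⟨k-1, hkk⟩ = u ⟨k-1, hkk⟩ from if_neg (by simp),
                show (zb hp (k-1) v) ⟨k-1, hkk⟩ = v ⟨k-1, hkk⟩ from if_neg (by simp)]
              exact heq
            · intro i hi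
              have := i.isLt
              omega
          refine ⟨wa.append (SimpleGraph.Walk.cons hadj wb.reverse), ?_⟩
          rw [SimpleGraph.Walk.length_append, SimpleGraph.Walk.length_cons,
            SimpleGraph.Walk.length_reverse]
          omega



/-! ### Potential layer -/

lemma zpat_of_ge {x : ∀ i : Fin k, Fin (n i)} {j : ℕ} (h : k ≤ j) :
    zpat n k x j = false := by
  simp [zpat, extVal_ge h]

lemma phi_lip {x y : ∀ i : Fin k, Fin (n i)} (h : HierAdj n k x y) :
    Phib k (zpat n k y) ≤ Phib k (zpat n k x) + 1 := by
  obtain ⟨hne, hcase⟩ := h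
  rcases hcase with h1 | ⟨j, hj, hag⟩ | ⟨m, hm0, hpre, hxm, hym, hxy, hs⟩
  · apply lip1
    intro j hj0
    by_cases hjk : j < k
    · simp only [zpat]
      rw [extVal_lt hjk, extVal_lt hjk, h1 ⟨j, hjk⟩ hj0]
    · simp only [zpat]
      rw [extVal_ge (by omega), extVal_ge (by omega)]
  · have hagp : ∀ i, j.val + 1 ≤ i → zpat n k x i = zpat n k y i := by
      intro i hi
      by_cases hik : i < k
      · simp only [zpat]
        rw [extVal_lt hik, extVal_lt hik, hag ⟨i, hik⟩ (show (j : ℕ) < i by omega)]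
      · simp only [zpat]
        rw [extVal_ge (by omega), extVal_ge (by omega)]
    have hjk := j.isLt
    rcases hj with ⟨hx0, hy0⟩ | ⟨hy0, hx0⟩
    · have hf : ∀ i, i < j.val + 1 → zpat n k x i = false := by
        intro i hi
        have hik : i < k := by omega
        simp only [zpat]
        rw [extVal_lt hik]
        simpa using hx0 ⟨i, hik⟩ (show i ≤ (j : ℕ) by omega)
      have hg : ∀ i, i < j.val + 1 → zpat n k y i = true := by
        intro i hi
        have hik : i < k := by omega
        simp only [zpat]
        rw [extVal_lt hik]
        simpa using hy0 ⟨i, hik⟩ (show i ≤ (j : ℕ) by omega)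
      exact (lip2 (zpat n k x) (zpat n k y) (by omega) (by omega) hf hg
        fun i hi => hagp i hi).2
    · have hf : ∀ i, i < j.val + 1 → zpat n k y i = false := by
        intro i hi
        have hik : i < k := by omega
        simp only [zpat]
        rw [extVal_lt hik]
        simpa using hy0 ⟨i, hik⟩ (show i ≤ (j : ℕ) by omega)
      have hg : ∀ i, i < j.val + 1 → zpat n k x i = true := by
        intro i hi
        have hik : i < k := by omega
        simp only [zpat]
        rw [extVal_lt hik]
        simpa using hx0 ⟨i, hik⟩ (show i ≤ (j : ℕ) by omega)
      exact (lip2 (zpat n k y) (zpat n k x) (by omega) (by omega) hf hg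
        fun i hi => (hagp i hi).symm).1
  · have hzp : zpat n k x = zpat n k y := by
      funext i
      by_cases hik : i < k
      · simp only [zpat]
        rw [extVal_lt hik, extVal_lt hik]
        rcases lt_trichotomy i m.val with h | h | h
        · rw [(hpre ⟨i, hik⟩ h).1, (hpre ⟨i, hik⟩ h).2]
        · have him : (⟨i, hik⟩ : Fin k) = m := Fin.val_injective (by simpa using h)
          rw [him]
          simp [hxm, hym]
        · rw [hs ⟨i, hik⟩ (by simpa using h)]
      · simp [zpat, extVal_ge (le_of_not_gt hik)]
    rw [hzp]
    omega

lemma phi_walk {a b : ∀ i : Fin k, Fin (n i)} (p : (hierGraph n k).Walk a b) :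
    Phib k (zpat n k b) ≤ Phib k (zpat n k a) + p.length := by
  induction p with
  | nil => simp
  | cons h q ih =>
    have hl : Phib k (zpat n k _) ≤ Phib k (zpat n k _) + 1 := phi_lip h
    rw [SimpleGraph.Walk.length_cons]
    push_cast
    omega

def vst (n : ℕ → ℕ) (k : ℕ) (h2 : ∀ i : Fin k, 2 ≤ n i) : ∀ i : Fin k, Fin (n i) :=
  fun i => if (k - i.val) % 2 = 0 then ⟨1, by have := h2 i; omega⟩
    else ⟨0, by have := h2 i; omega⟩

def ust (n : ℕ → ℕ) (k : ℕ) (h2 : ∀ i : Fin k, 2 ≤ n i) : ∀ i : Fin k, Fin (n i) :=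
  fun i => if (k - i.val) % 2 = 0 then ⟨0, by have := h2 i; omega⟩
    else ⟨1, by have := h2 i; omega⟩

lemma zpat_vst (h2 : ∀ i : Fin k, 2 ≤ n i) {j : ℕ} (hj : j < k) :
    zpat n k (vst n k h2) j = Pb k j := by
  simp only [zpat, extVal_lt hj, vst]
  by_cases h : (k - j) % 2 = 0
  · simp [h, Pb]
  · simp [h, Pb]

lemma zpat_ust (h2 : ∀ i : Fin k, 2 ≤ n i) {j : ℕ} (hj : j < k) :
    zpat n k (ust n k h2) j = !(Pb k j) := by
  simp only [zpat, extVal_lt hj, ust]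
  by_cases h : (k - j) % 2 = 0
  · simp [h, Pb]
  · simp [h, Pb]

lemma dist_lower (hp : ∀ i : Fin k, 0 < n i) (h2 : ∀ i : Fin k, 2 ≤ n i) (hk : 1 ≤ k) :
    2 * k - 1 ≤ (hierGraph n k).dist (vst n k h2) (ust n k h2) := by
  obtain ⟨w0, _⟩ := exists_short_walk hp h2 hk (vst n k h2) (ust n k h2)
  have hreach : (hierGraph n k).Reachable (vst n k h2) (ust n k h2) := ⟨w0⟩
  obtain ⟨p, hplen⟩ := hreach.exists_walk_length_eq_dist
  have hwalk := phi_walk p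
  have hv : Phib k (zpat n k (vst n k h2)) = 0 :=
    phib_vpat hk _ (fun j hj => zpat_vst h2 hj) (fun j hj => zpat_of_ge hj)
  have hu : Phib k (zpat n k (ust n k h2)) = 2 * (k : ℤ) - 1 :=
    phib_upat hk _ (fun j hj => zpat_ust h2 hj) (fun j hj => zpat_of_ge hj)
  rw [hv, hu, hplen] at hwalk
  omega

end GraphLayer
end Stmt14


/-- The diameter of `H_{n_1,…,n_k}` (maximum distance between two vertices)
equals `2k - 1`. -/
theorem stmt_14 (n : ℕ → ℕ) (k : ℕ) (hk : 1 ≤ k) (hn : ∀ i < k, 2 ≤ n i) :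
    (Finset.univ.sup fun x : ∀ i : Fin k, Fin (n i) =>
        Finset.univ.sup fun y : ∀ i : Fin k, Fin (n i) => (hierGraph n k).dist x y) =
      2 * k - 1 := by
  classical
  have h2 : ∀ i : Fin k, 2 ≤ n i := fun i => hn i.val i.isLt
  have hp : ∀ i : Fin k, 0 < n i := fun i => by have := h2 i; omega
  apply le_antisymm
  · refine Finset.sup_le fun x _ => Finset.sup_le fun y _ => ?_
    obtain ⟨w, hw⟩ := Stmt14.exists_short_walk hp h2 hk x y
    exact le_trans (SimpleGraph.dist_le w) hw
  · calc 2 * k - 1 ≤ (hierGraph n k).dist (Stmt14.vst n k h2) (Stmt14.ust n k h2) :=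
          Stmt14.dist_lower hp h2 hk
      _ ≤ Finset.univ.sup fun y => (hierGraph n k).dist (Stmt14.vst n k h2) y :=
          Finset.le_sup (Finset.mem_univ _)
      _ ≤ Finset.univ.sup fun x : ∀ i : Fin k, Fin (n i) =>
            Finset.univ.sup fun y : ∀ i : Fin k, Fin (n i) => (hierGraph n k).dist x y :=
          Finset.le_sup (f := fun x => Finset.univ.sup fun y => (hierGraph n k).dist x y)
            (Finset.mem_univ _)
end

section
/- Let k ≥ 1 and consider the hierarchical graph H_{2,…,2} (k copies of 2), whose vertices are binary strings of length k. This graph is a tree (it is connected and acyclic); in particular it has 2^k vertices and 2^k − 1 edges. -/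
namespace Stmt16Aux

abbrev V (k : ℕ) := ∀ _ : Fin k, Fin 2

def flp (a : Fin 2) : Fin 2 := if a = 0 then 1 else 0

lemma flp_ne : ∀ a : Fin 2, flp a ≠ a := by decide
lemma eq_flp_of_ne : ∀ a b : Fin 2, a ≠ b → b = flp a := by decide
lemma fin2_cases : ∀ a : Fin 2, a = 0 ∨ a = 1 := by decide
lemma val_ne_zero_iff : ∀ a : Fin 2, a.val ≠ 0 ↔ a = 1 := by decide
lemma val_eq_zero_iff : ∀ a : Fin 2, a.val = 0 ↔ a = 0 := by decide
lemma flp_zero : flp 0 = 1 := by decide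
lemma flp_one : flp 1 = 0 := by decide

variable {k : ℕ}

def runP (v : V k) (m : ℕ) : Prop :=
  m = k ∨ ∃ h : m < k, v ⟨m, h⟩ ≠ v ⟨0, Nat.lt_of_le_of_lt (Nat.zero_le m) h⟩

instance (v : V k) : DecidablePred (runP v) := fun m => by
  unfold runP; infer_instance

lemma runP_exists (v : V k) : ∃ m, runP v m := ⟨k, Or.inl rfl⟩

def run (v : V k) : ℕ := Nat.find (runP_exists v)

lemma run_le (v : V k) : run v ≤ k := Nat.find_min' _ (Or.inl rfl)

lemma run_spec (v : V k) : runP v (run v) := Nat.find_spec _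

lemma run_pos (hk : 0 < k) (v : V k) : 0 < run v := by
  rcases Nat.eq_zero_or_pos (run v) with h | h' 
  · exfalso
    have := run_spec v
    rw [h] at this
    rcases this with h2 | ⟨h2, h3⟩
    · omega
    · exact h3 rfl
  · exact h' 

lemma eq_of_lt_run (hk : 0 < k) (v : V k) (i : Fin k) (h : i.val < run v) :
    v i = v ⟨0, hk⟩ := by
  have := Nat.find_min (runP_exists v) h
  unfold runP at this
  push_neg at this
  have h2 := this.2 i.isLt
  simpa using h2

lemma run_eq (hk : 0 < k) (v : V k) (r : ℕ)
    (hconst : ∀ i : Fin k, i.val < r → v i = v ⟨0, hk⟩)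
    (hstop : runP v r) : run v = r := by
  have hrk : r ≤ k := by rcases hstop with h | ⟨h, _⟩ <;> omega
  refine le_antisymm (Nat.find_min' _ hstop) ?_
  rw [show run v = Nat.find (runP_exists v) from rfl, Nat.le_find_iff]
  intro m hm hP
  rcases hP with h | ⟨h, h'⟩
  · have := run_le v; omega
  · exact h' (hconst ⟨m, h⟩ hm)

end Stmt16Aux
namespace Stmt16Aux

variable {k : ℕ}

def par (v : V k) : V k := fun i => if i.val < run v then flp (v i) else v i

def rt : V k := fun _ => 0

lemma par_lt (v : V k) (i : Fin k) (h : i.val < run v) : par v i = flp (v i) := if_pos h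
lemma par_ge (v : V k) (i : Fin k) (h : ¬ i.val < run v) : par v i = v i := if_neg h

lemma ne_rt_iff (v : V k) : v ≠ rt ↔ ∃ i, v i ≠ 0 := by
  constructor
  · intro h
    by_contra h'
    push_neg at h'
    exact h (funext fun i => h' i)
  · rintro ⟨i, hi⟩ h
    exact hi (congrFun h i)

lemma v0_eq_one (hk : 0 < k) (v : V k) (hv : v ≠ rt) (h : run v = k) :
    v ⟨0, hk⟩ = 1 := by
  rcases fin2_cases (v ⟨0, hk⟩) with h0 | h0
  · exfalso
    apply hv
    funext i
    have := eq_of_lt_run hk v i (by rw [h]; exact i.isLt)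
    rw [this, h0]; rfl
  · exact h0

lemma run_par_ge (hk : 0 < k) (v : V k) (h : run v < k) :
    run v + 1 ≤ run (par v) := by
  rw [show run (par v) = Nat.find (runP_exists (par v)) from rfl, Nat.le_find_iff]
  intro m hm hP
  have hflip0 : par v ⟨0, hk⟩ = flp (v ⟨0, hk⟩) := par_lt v _ (run_pos hk v)
  rcases hP with h2 | ⟨h2, h3⟩
  · omega
  · apply h3
    rw [hflip0]
    by_cases hmr : m < run v
    · rw [par_lt v _ hmr, eq_of_lt_run hk v _ hmr]
    · have hmr' : m = run v := by omega
      rw [par_ge v _ hmr]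
      subst hmr'
      rcases run_spec v with h4 | ⟨h4, h5⟩
      · omega
      · exact eq_flp_of_ne _ _ (fun he => h5 (by simpa using he.symm))

lemma par_of_run_k (hk : 0 < k) (v : V k) (hv : v ≠ rt) (h : run v = k) :
    par v = rt := by
  funext i
  have h1 : v i = 1 := by
    rw [eq_of_lt_run hk v i (by rw [h]; exact i.isLt), v0_eq_one hk v hv h]
  rw [par_lt v i (by rw [h]; exact i.isLt), h1]
  rfl

end Stmt16Aux
namespace Stmt16Aux

variable {k : ℕ}

def Phi (j : Fin k) (x y : V k) : Prop :=
  (∀ i : Fin k, i.val ≤ j.val → x i = 0 ∧ y i = 1) ∧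
  (∀ i : Fin k, j.val < i.val → x i = y i)

lemma phi_ne {j : Fin k} {x y : V k} (h : Phi j x y) : x ≠ y := by
  intro he
  have := (h.1 j le_rfl)
  rw [he] at this
  exact absurd (this.1.symm.trans this.2) (by decide)

lemma adj_iff (x y : V k) :
    (hierGraph (fun _ => 2) k).Adj x y ↔ ∃ j : Fin k, Phi j x y ∨ Phi j y x := by
  show HierAdj (fun _ => 2) k x y ↔ _
  constructor
  · rintro ⟨hne, h⟩
    rcases h with h | ⟨j, hj, hag⟩ | ⟨m, hm, hpre, hx, hy, hxy, hs⟩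
    · -- A1
      have hk : 0 < k := by
        rcases Nat.eq_zero_or_pos k with h0 | h0
        · exact absurd (funext fun i => absurd i.isLt (by omega)) hne
        · exact h0
      refine ⟨⟨0, hk⟩, ?_⟩
      have h0ne : x ⟨0, hk⟩ ≠ y ⟨0, hk⟩ := by
        intro he
        apply hne
        funext i
        rcases Nat.eq_zero_or_pos i.val with h1 | h1
        · have : i = ⟨0, hk⟩ := Fin.ext h1
          rw [this]; exact he
        · exact h i h1
      have hzeq : ∀ i : Fin k, i.val ≤ 0 → i = ⟨0, hk⟩ := fun i hi => Fin.ext (Nat.le_zero.1 hi)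
      rcases fin2_cases (x ⟨0, hk⟩) with h0 | h0
      · refine Or.inl ⟨fun i hi => ?_, fun i hi => h i hi⟩
        rw [hzeq i hi]
        refine ⟨h0, ?_⟩
        rcases fin2_cases (y ⟨0, hk⟩) with h1 | h1
        · exact absurd (h0.trans h1.symm) h0ne
        · exact h1
      · refine Or.inr ⟨fun i hi => ?_, fun i hi => (h i hi).symm⟩
        rw [hzeq i hi]
        refine ⟨?_, h0⟩
        rcases fin2_cases (y ⟨0, hk⟩) with h1 | h1
        · exact h1
        · exact absurd (h0.trans h1.symm) h0ne
    · -- A2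
      refine ⟨j, ?_⟩
      rcases hj with ⟨hx0, hy1⟩ | ⟨hy0, hx1⟩
      · exact Or.inl ⟨fun i hi => ⟨(val_eq_zero_iff _).1 (hx0 i hi),
          (val_ne_zero_iff _).1 (hy1 i hi)⟩, hag⟩
      · exact Or.inr ⟨fun i hi => ⟨(val_eq_zero_iff _).1 (hy0 i hi),
          (val_ne_zero_iff _).1 (hx1 i hi)⟩, fun i hi => (hag i hi).symm⟩
    · -- A3 impossible
      exact absurd (((val_ne_zero_iff _).1 hx).trans ((val_ne_zero_iff _).1 hy).symm) hxy
  · rintro ⟨j, h | h⟩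
    · refine ⟨phi_ne h, Or.inr (Or.inl ⟨j, Or.inl ⟨fun i hi => ?_, fun i hi => ?_⟩, h.2⟩)⟩
      · rw [(h.1 i hi).1]; rfl
      · rw [(h.1 i hi).2]; exact Nat.one_ne_zero
    · refine ⟨(phi_ne h).symm, Or.inr (Or.inl ⟨j, Or.inr ⟨fun i hi => ?_, fun i hi => ?_⟩,
        fun i hi => (h.2 i hi).symm⟩)⟩
      · rw [(h.1 i hi).1]; rfl
      · rw [(h.1 i hi).2]; exact Nat.one_ne_zero

end Stmt16Aux
namespace Stmt16Aux

variable {k : ℕ}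

lemma adj_par (hk : 0 < k) (v : V k) (hv : v ≠ rt) :
    (hierGraph (fun _ => 2) k).Adj v (par v) := by
  rw [adj_iff]
  have hr1 : 1 ≤ run v := run_pos hk v
  have hrk : run v ≤ k := run_le v
  refine ⟨⟨run v - 1, by omega⟩, ?_⟩
  have hconst : ∀ i : Fin k, i.val ≤ run v - 1 → v i = v ⟨0, hk⟩ :=
    fun i hi => eq_of_lt_run hk v i (by omega)
  have hpar : ∀ i : Fin k, i.val ≤ run v - 1 → par v i = flp (v i) :=
    fun i hi => par_lt v i (by omega)
  have hag : ∀ i : Fin k, (run v - 1 : ℕ) < i.val → v i = par v i :=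
    fun i hi => (par_ge v i (by omega)).symm
  rcases fin2_cases (v ⟨0, hk⟩) with h0 | h0
  · refine Or.inl ⟨fun i hi => ?_, hag⟩
    rw [hpar i hi, hconst i hi, h0]
    exact ⟨rfl, rfl⟩
  · refine Or.inr ⟨fun i hi => ?_, fun i hi => (hag i hi).symm⟩
    rw [hpar i hi, hconst i hi, h0]
    exact ⟨rfl, rfl⟩

lemma reach_aux (hk : 0 < k) :
    ∀ n (v : V k), k - run v ≤ n → (hierGraph (fun _ => 2) k).Reachable rt v := by
  have base : ∀ v : V k, v ≠ rt → run v = k → (hierGraph (fun _ => 2) k).Reachable rt v := by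
    intro v hv hr
    have := adj_par hk v hv
    rw [par_of_run_k hk v hv hr] at this
    exact this.symm.reachable
  intro n
  induction n with
  | zero =>
    intro v h
    by_cases hv : v = rt
    · subst hv; rfl
    · exact base v hv (by have := run_le v; omega)
  | succ n ih =>
    intro v h
    by_cases hv : v = rt
    · subst hv; rfl
    · by_cases hr : run v = k
      · exact base v hv hr
      · have h1 : run v + 1 ≤ run (par v) := run_par_ge hk v (by have := run_le v; omega)
        have h2 : k - run (par v) ≤ n := by omega
        exact (ih (par v) h2).trans (adj_par hk v hv).symm.reachable

lemma connected (hk : 0 < k) : (hierGraph (fun _ => 2) k).Connected := by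
  haveI : Nonempty (V k) := ⟨rt⟩
  refine ⟨fun u v => ?_⟩
  exact (reach_aux hk _ u le_rfl).symm.trans (reach_aux hk _ v le_rfl)

end Stmt16Aux
namespace Stmt16Aux

variable {k : ℕ}

lemma cross (hk : 0 < k) {j : Fin k} {x y : V k} (hphi : Phi j x y) (c : V k)
    (hc : c = x ∨ c = y)
    (hcj : ∀ h' : j.val + 1 < k, c ⟨j.val + 1, h'⟩ ≠ c j)
    (z z' : V k) (hadj : (hierGraph (fun _ => 2) k).Adj z z')
    (hz : ∀ i : Fin k, j.val ≤ i.val → z i = c i)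
    (hz' : ¬ ∀ i : Fin k, j.val ≤ i.val → z' i = c i) :
    s(z, z') = s(x, y) := by
  obtain ⟨m, hm⟩ := (adj_iff z z').1 hadj
  have hne : ∀ i : Fin k, i.val ≤ m.val → z i ≠ z' i := by
    rcases hm with h | h
    · intro i hi he
      have := (h.1 i hi)
      rw [this.1, this.2] at he
      exact absurd he (by decide)
    · intro i hi he
      have := (h.1 i hi)
      rw [this.1, this.2] at he
      exact absurd he (by decide)
  have hzc : ∀ i i' : Fin k, i.val ≤ m.val → i'.val ≤ m.val → z i = z i' := by
    rcases hm with h | h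
    · intro i i' hi hi'
      rw [(h.1 i hi).1, (h.1 i' hi').1]
    · intro i i' hi hi'
      rw [(h.1 i hi).2, (h.1 i' hi').2]
  have hag : ∀ i : Fin k, m.val < i.val → z i = z' i := by
    rcases hm with h | h
    · exact h.2
    · exact fun i hi => (h.2 i hi).symm
  push_neg at hz'
  obtain ⟨i0, hi0j, hi0⟩ := hz'
  have hi0m : i0.val ≤ m.val := by
    by_contra h'
    exact hi0 ((hag i0 (by omega)).symm.trans (hz i0 hi0j))
  have hjm : j.val ≤ m.val := le_trans hi0j hi0m
  have hmj : m = j := by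
    by_contra h'
    have hlt : j.val < m.val := lt_of_le_of_ne hjm (fun he => h' (Fin.ext he.symm))
    have hj1 : j.val + 1 < k := by have := m.isLt; omega
    apply hcj hj1
    have e1 : c ⟨j.val + 1, hj1⟩ = z ⟨j.val + 1, hj1⟩ := (hz _ (by simp)).symm
    have e2 : c j = z j := (hz j le_rfl).symm
    rw [e1, e2]
    exact hzc _ _ (by simp; omega) (by omega)
  subst hmj
  have hcconst : ∀ i : Fin k, i.val ≤ m.val → c i = c m := by
    rcases hc with rfl | rfl
    · intro i hi; rw [(hphi.1 i hi).1, (hphi.1 m le_rfl).1]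
    · intro i hi; rw [(hphi.1 i hi).2, (hphi.1 m le_rfl).2]
  have hzceq : z = c := by
    funext i
    by_cases hij : m.val ≤ i.val
    · exact hz i hij
    · have h1 : z i = z m := hzc i m (by omega) le_rfl
      rw [h1, hz m le_rfl, hcconst i (by omega)]
  have hnec : ∀ i : Fin k, i.val ≤ m.val → c i ≠ z' i := by
    intro i hi
    rw [← hzceq]
    exact hne i hi
  rcases hc with rfl | rfl
  · -- c = x ; other endpoint is y
    have hz'y : z' = y := by
      funext i
      by_cases hij : i.val ≤ m.val
      · have h1 : z' i = flp (c i) := eq_flp_of_ne _ _ (hnec i hij)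
        rw [h1, (hphi.1 i hij).1, (hphi.1 i hij).2]
        decide
      · rw [← hag i (by omega), hzceq, hphi.2 i (by omega)]
    rw [hzceq, hz'y]
  · -- c = y ; other endpoint is x
    have hz'x : z' = x := by
      funext i
      by_cases hij : i.val ≤ m.val
      · have h1 : z' i = flp (c i) := eq_flp_of_ne _ _ (hnec i hij)
        rw [h1, (hphi.1 i hij).2, (hphi.1 i hij).1]
        decide
      · rw [← hag i (by omega), hzceq, ← hphi.2 i (by omega)]
    rw [hzceq, hz'x]
    exact Sym2.eq_swap

end Stmt16Aux
namespace Stmt16Aux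

variable {k : ℕ}

lemma not_reach_del (hk : 0 < k) {j : Fin k} {x y : V k} (hphi : Phi j x y) :
    ¬((hierGraph (fun _ => 2) k) \ SimpleGraph.fromEdgeSet {s(x, y)}).Reachable x y := by
  intro hre
  obtain ⟨c, hc, hcj⟩ : ∃ c : V k, (c = x ∨ c = y) ∧
      ∀ h' : j.val + 1 < k, c ⟨j.val + 1, h'⟩ ≠ c j := by
    by_cases hj1 : j.val + 1 < k
    · rcases fin2_cases (x ⟨j.val + 1, hj1⟩) with h0 | h0
      · refine ⟨y, Or.inr rfl, fun h' => ?_⟩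
        rw [← hphi.2 ⟨j.val + 1, hj1⟩ (by simp), h0, (hphi.1 j le_rfl).2]
        decide
      · refine ⟨x, Or.inl rfl, fun h' => ?_⟩
        rw [h0, (hphi.1 j le_rfl).1]
        decide
    · exact ⟨x, Or.inl rfl, fun h' => absurd h' hj1⟩
  have key : ∀ (u v : V k), (∀ i : Fin k, j.val ≤ i.val → u i = c i) →
      (¬ ∀ i : Fin k, j.val ≤ i.val → v i = c i) →
      ¬((hierGraph (fun _ => 2) k) \ SimpleGraph.fromEdgeSet {s(x, y)}).Reachable u v := by
    intro u v hu hv hre'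
    obtain ⟨w⟩ := hre'
    obtain ⟨d, _, hdS, hdS'⟩ := w.exists_boundary_dart
      {z : V k | ∀ i : Fin k, j.val ≤ i.val → z i = c i} hu hv
    have hadj' := d.adj
    rw [SimpleGraph.sdiff_adj] at hadj'
    apply hadj'.2
    rw [SimpleGraph.fromEdgeSet_adj]
    refine ⟨?_, hadj'.1.ne⟩
    rw [Set.mem_singleton_iff]
    exact cross hk hphi c hc hcj d.fst d.snd hadj'.1 hdS hdS'
  have hxj := (hphi.1 j le_rfl).1
  have hyj := (hphi.1 j le_rfl).2
  rcases hc with rfl | rfl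
  · refine key c y (fun i _ => rfl) ?_ hre
    intro hS
    have := hS j le_rfl
    rw [hyj, hxj] at this
    exact absurd this (by decide)
  · refine key c x (fun i _ => rfl) ?_ hre.symm
    intro hS
    have := hS j le_rfl
    rw [hxj, hyj] at this
    exact absurd this (by decide)

lemma acyclic (hk : 0 < k) : (hierGraph (fun _ => 2) k).IsAcyclic := by
  rw [SimpleGraph.isAcyclic_iff_forall_adj_isBridge]
  intro x y hadj
  rw [SimpleGraph.isBridge_iff]
  obtain ⟨j, hj | hj⟩ := (adj_iff x y).1 hadj
  · exact not_reach_del hk hj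
  · intro hre
    apply not_reach_del hk hj
    rw [show s(y, x) = s(x, y) from Sym2.eq_swap]
    exact hre.symm

end Stmt16Aux
namespace Stmt16Aux

variable {k : ℕ}

lemma mem_image_of_phi (hk : 0 < k) {j : Fin k} {x y : V k} (hphi : Phi j x y) :
    s(x, y) ∈ (fun v => s(v, par v)) '' {v : V k | v ≠ rt} := by
  have hj0 : (0 : ℕ) ≤ j.val := Nat.zero_le _
  by_cases hj1 : j.val + 1 < k
  · rcases fin2_cases (x ⟨j.val + 1, hj1⟩) with h0 | h0
    · -- value after the block is 0 : the child is y
      have hy1 : ∀ i : Fin k, i.val ≤ j.val → y i = 1 := fun i hi => (hphi.1 i hi).2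
      have hy0 : y ⟨0, hk⟩ = 1 := hy1 _ hj0
      have hyj1 : y ⟨j.val + 1, hj1⟩ = 0 := by
        rw [← hphi.2 ⟨j.val + 1, hj1⟩ (by simp), h0]
      have hrun : run y = j.val + 1 := by
        refine run_eq hk y (j.val + 1) (fun i hi => by rw [hy1 i (by omega), hy0]) ?_
        exact Or.inr ⟨hj1, by rw [hyj1, hy0]; decide⟩
      have hpar : par y = x := by
        funext i
        by_cases hij : i.val ≤ j.val
        · rw [par_lt y i (by omega), hy1 i hij, (hphi.1 i hij).1]
          decide
        · rw [par_ge y i (by omega)]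
          exact (hphi.2 i (by omega)).symm
      refine ⟨y, ?_, ?_⟩
      · exact (ne_rt_iff y).2 ⟨j, by rw [hy1 j le_rfl]; decide⟩
      · show s(y, par y) = s(x, y)
        rw [hpar]
        exact Sym2.eq_swap
    · -- value after the block is 1 : the child is x
      have hx0 : ∀ i : Fin k, i.val ≤ j.val → x i = 0 := fun i hi => (hphi.1 i hi).1
      have hrun : run x = j.val + 1 := by
        refine run_eq hk x (j.val + 1) (fun i hi => by rw [hx0 i (by omega), hx0 _ hj0]) ?_
        exact Or.inr ⟨hj1, by rw [h0, hx0 _ hj0]; decide⟩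
      have hpar : par x = y := by
        funext i
        by_cases hij : i.val ≤ j.val
        · rw [par_lt x i (by omega), hx0 i hij, (hphi.1 i hij).2]
          decide
        · rw [par_ge x i (by omega)]
          exact hphi.2 i (by omega)
      refine ⟨x, ?_, ?_⟩
      · exact (ne_rt_iff x).2 ⟨⟨j.val + 1, hj1⟩, by rw [h0]; decide⟩
      · show s(x, par x) = s(x, y)
        rw [hpar]
  · -- j is the last index : the child is y = all ones
    have hjk : j.val = k - 1 := by have := j.isLt; omega
    have hy1 : ∀ i : Fin k, y i = 1 := fun i => (hphi.1 i (by have := i.isLt; omega)).2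
    have hrun : run y = k := by
      refine run_eq hk y k (fun i _ => by rw [hy1 i, hy1]) (Or.inl rfl)
    have hpar : par y = x := by
      funext i
      rw [par_lt y i (by rw [hrun]; exact i.isLt), hy1 i,
        (hphi.1 i (by have := i.isLt; omega)).1]
      decide
    refine ⟨y, ?_, ?_⟩
    · exact (ne_rt_iff y).2 ⟨j, by rw [hy1 j]; decide⟩
    · show s(y, par y) = s(x, y)
      rw [hpar]
      exact Sym2.eq_swap

lemma injOn_par (hk : 0 < k) :
    Set.InjOn (fun v => s(v, par v)) {v : V k | v ≠ rt} := by
  intro v hv v' hv' he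
  simp only [Sym2.eq_iff] at he
  rcases he with ⟨h1, _⟩ | ⟨h1, h2⟩
  · exact h1
  · exfalso
    have hdiff : ∀ i : Fin k, v i ≠ v' i ↔ i.val < run v := by
      intro i
      constructor
      · intro hne
        by_contra h'
        exact hne (by rw [← h2, par_ge v i h'])
      · intro h'
        rw [← h2, par_lt v i h']
        exact fun he' => flp_ne _ he'.symm
    have hdiff' : ∀ i : Fin k, v' i ≠ v i ↔ i.val < run v' := by
      intro i
      constructor
      · intro hne
        by_contra h'
        exact hne (by rw [h1, par_ge v' i h'])
      · intro h'
        rw [h1, par_lt v' i h']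
        exact fun he' => flp_ne _ he'.symm
    have hreq : run v = run v' := by
      by_contra hne
      rcases Nat.lt_or_ge (run v) (run v') with h | h
      · have hlt : run v < k := lt_of_lt_of_le h (run_le v')
        have := (hdiff ⟨run v, hlt⟩).1 (fun he' => ((hdiff' ⟨run v, hlt⟩).2 h) he'.symm)
        simp at this
      · have h' : run v' < run v := by omega
        have hlt : run v' < k := lt_of_lt_of_le h' (run_le v)
        have := (hdiff' ⟨run v', hlt⟩).1 (fun he' => ((hdiff ⟨run v', hlt⟩).2 h') he'.symm)
        simp at this
    rcases Nat.lt_or_ge (run v) k with h | h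
    · have hge := run_par_ge hk v h
      rw [h2, ← hreq] at hge
      omega
    · have hrk : run v = k := le_antisymm (run_le v) h
      have := par_of_run_k hk v hv hrk
      rw [h2] at this
      exact hv' this

lemma edgeSet_eq (hk : 0 < k) :
    (fun v => s(v, par v)) '' {v : V k | v ≠ rt} =
      (hierGraph (fun _ => 2) k).edgeSet := by
  apply Set.eq_of_subset_of_subset
  · rintro e ⟨v, hv, rfl⟩
    rw [SimpleGraph.mem_edgeSet]
    exact adj_par hk v hv
  · intro e he
    induction e with
    | _ x y =>
      rw [SimpleGraph.mem_edgeSet] at he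
      obtain ⟨j, hj | hj⟩ := (adj_iff x y).1 he
      · exact mem_image_of_phi hk hj
      · rw [show s(x, y) = s(y, x) from Sym2.eq_swap]
        exact mem_image_of_phi hk hj

end Stmt16Aux

/-- The graph `H_{2,…,2}` (k copies of 2) is a tree; in particular it has `2^k` vertices
and `2^k - 1` edges. -/
theorem stmt_16 (k : ℕ) (hk : 1 ≤ k) :
    (hierGraph (fun _ => 2) k).IsTree ∧
    Fintype.card (∀ i : Fin k, Fin 2) = 2 ^ k ∧
    (hierGraph (fun _ => 2) k).edgeSet.ncard = 2 ^ k - 1 := by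
  have hk' : 0 < k := hk
  have hcard : Fintype.card (∀ _ : Fin k, Fin 2) = 2 ^ k := by simp
  have hedge : (hierGraph (fun _ => 2) k).edgeSet.ncard = 2 ^ k - 1 := by
    rw [← Stmt16Aux.edgeSet_eq hk', Set.ncard_image_of_injOn (Stmt16Aux.injOn_par hk')]
    have h1 : ({Stmt16Aux.rt} : Set (Stmt16Aux.V k)).ncard +
        ({Stmt16Aux.rt}ᶜ : Set (Stmt16Aux.V k)).ncard = Nat.card (Stmt16Aux.V k) :=
      Set.ncard_add_ncard_compl _
    have h2 : {v : Stmt16Aux.V k | v ≠ Stmt16Aux.rt} =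
        ({Stmt16Aux.rt}ᶜ : Set (Stmt16Aux.V k)) := by
      ext v; simp
    rw [h2]
    have h3 : ({Stmt16Aux.rt} : Set (Stmt16Aux.V k)).ncard = 1 := Set.ncard_singleton _
    have h4 : Nat.card (Stmt16Aux.V k) = 2 ^ k := by
      rw [Nat.card_eq_fintype_card]
      simpa using hcard
    omega
  exact ⟨⟨Stmt16Aux.connected hk', Stmt16Aux.acyclic hk'⟩, hcard, hedge⟩
end
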